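/- arXiv:1905.01731 — 7 statements merged into one kernel-verified Lean document; each statement's English description precedes it below -/
import Mathlib

section
/- Let (X_γ)_{γ∈Γ} be a family of real strictly convex Banach spaces with dim X_γ ≥ 2 for every γ ∈ Γ, and let Z_∞ = ⊕_{γ∈Γ}^{ℓ∞} X_γ. Then every element of the closed unit ball of Z_∞ can be written as the mean (p + q)/2 of two extreme points p, q of the closed unit ball of Z_∞. -/
open scoped ENNReal

/-- In a real normed space of rank `> 1`, every `z` in the closed unit ball can be written
as the midpoint of two points of the unit sphere. -/
lemma exists_unit_pair_aux {E : Type*} [NormedAddCommGroup E] [NormedSpace ℝ E]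
    (h : 1 < Module.rank ℝ E) {z : E} (hz : ‖z‖ ≤ 1) :
    ∃ p : E, ‖p‖ = 1 ∧ ‖(2 : ℝ) • z - p‖ = 1 := by
  have hnt : Nontrivial E := (rank_pos_iff_nontrivial (R := ℝ)).1 (zero_lt_one.trans h)
  -- choose a unit vector `u` with `‖2z - u‖ ≤ 1` and `‖2z - (-u)‖ ≥ 1`
  obtain ⟨u, hu, hu1, hu2⟩ :
      ∃ u : E, ‖u‖ = 1 ∧ ‖(2 : ℝ) • z - u‖ ≤ 1 ∧ 1 ≤ ‖(2 : ℝ) • z - -u‖ := by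
    rcases eq_or_ne z 0 with rfl | hz0
    · obtain ⟨u, hu⟩ := exists_norm_eq E zero_le_one
      refine ⟨u, hu, ?_, ?_⟩ <;> simp [hu]
    · have hz0' : ‖z‖ ≠ 0 := norm_ne_zero_iff.2 hz0
      have hzpos : 0 < ‖z‖ := norm_pos_iff.2 hz0
      refine ⟨‖z‖⁻¹ • z, ?_, ?_, ?_⟩
      · rw [norm_smul, norm_inv, norm_norm, inv_mul_cancel₀ hz0']
      · have : (2 : ℝ) • z - ‖z‖⁻¹ • z = (2 - ‖z‖⁻¹) • z := by
          rw [sub_smul]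
        rw [this, norm_smul]
        have : ‖(2 - ‖z‖⁻¹ : ℝ)‖ * ‖z‖ = |2 * ‖z‖ - 1| := by
          rw [Real.norm_eq_abs, ← abs_of_pos hzpos, ← abs_mul]
          congr 1
          field_simp
          rw [abs_of_pos hzpos]; ring
        rw [this]
        rw [abs_le]
        constructor <;> nlinarith
      · have : (2 : ℝ) • z - -(‖z‖⁻¹ • z) = (2 + ‖z‖⁻¹) • z := by
          rw [sub_neg_eq_add, add_smul]
        rw [this, norm_smul, Real.norm_eq_abs]
        have h1 : |2 + ‖z‖⁻¹| = 2 + ‖z‖⁻¹ := by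
          rw [abs_of_pos]; positivity
        rw [h1]
        have h2 : ‖z‖⁻¹ * ‖z‖ = 1 := inv_mul_cancel₀ hz0'
        nlinarith
  -- intermediate value theorem on the connected unit sphere
  have hconn : IsConnected (Metric.sphere (0 : E) 1) := isConnected_sphere h 0 zero_le_one
  have hu_mem : u ∈ Metric.sphere (0 : E) 1 := by simpa using hu
  have hnu_mem : -u ∈ Metric.sphere (0 : E) 1 := by simpa using hu
  have hcont : ContinuousOn (fun p : E => ‖(2 : ℝ) • z - p‖) (Metric.sphere (0 : E) 1) :=
    (Continuous.norm (by continuity)).continuousOn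
  have := hconn.isPreconnected.intermediate_value hu_mem hnu_mem hcont
  have hmem : (1 : ℝ) ∈ Set.Icc ‖(2 : ℝ) • z - u‖ ‖(2 : ℝ) • z - -u‖ := ⟨hu1, hu2⟩
  obtain ⟨p, hpS, hp⟩ := this hmem
  exact ⟨p, by simpa using hpS, hp⟩

/-- An element of the `ℓ∞`-sum all of whose coordinates have norm one is an extreme point
of the closed unit ball, provided each coordinate space is strictly convex. -/
lemma extreme_of_forall_norm_eq_one {Γ : Type*} {X : Γ → Type*}
    [∀ γ, NormedAddCommGroup (X γ)] [∀ γ, NormedSpace ℝ (X γ)]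
    [∀ γ, StrictConvexSpace ℝ (X γ)]
    (f : lp X ∞) (hf : ∀ γ, ‖f γ‖ = 1) :
    f ∈ Set.extremePoints ℝ (Metric.closedBall (0 : lp X ∞) 1) := by
  have hfball : f ∈ Metric.closedBall (0 : lp X ∞) 1 := by
    rw [Metric.mem_closedBall, dist_zero_right]
    exact lp.norm_le_of_forall_le zero_le_one fun γ => (hf γ).le
  refine ⟨hfball, fun x₁ hx₁ x₂ hx₂ hseg => ?_⟩
  obtain ⟨a, b, ha, hb, hab, heq⟩ := hseg
  have hx₁' : ∀ γ, ‖x₁ γ‖ ≤ 1 := by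
    intro γ
    have := lp.norm_apply_le_norm (p := ∞) (by norm_num) x₁ γ
    rw [Metric.mem_closedBall, dist_zero_right] at hx₁
    linarith
  have hx₂' : ∀ γ, ‖x₂ γ‖ ≤ 1 := by
    intro γ
    have := lp.norm_apply_le_norm (p := ∞) (by norm_num) x₂ γ
    rw [Metric.mem_closedBall, dist_zero_right] at hx₂
    linarith
  have hcoord : ∀ γ, a • x₁ γ + b • x₂ γ = f γ := by
    intro γ
    have := congrFun (congrArg (fun g : lp X ∞ => (g : ∀ γ, X γ)) heq) γ
    simp [lp.coeFn_add, lp.coeFn_smul] at this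
    exact this
  have hcoord_eq : ∀ γ, x₁ γ = x₂ γ := by
    intro γ
    by_contra hne
    have := norm_combo_lt_of_ne (hx₁' γ) (hx₂' γ) hne ha hb hab
    rw [hcoord γ, hf γ] at this
    exact lt_irrefl _ this
  have hx12 : x₁ = x₂ := by
    apply lp.ext
    funext γ
    exact hcoord_eq γ
  have hx1f : x₁ = f := by
    apply lp.ext
    funext γ
    have := hcoord γ
    rw [← hcoord_eq γ, ← add_smul, hab, one_smul] at this
    exact this
  exact hx1f

/-- If `(X γ)` is a family of strictly convex real Banach spaces of dimension at least 2,
then every element of the closed unit ball of the ℓ∞-sum `lp X ∞` is the mean of two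
extreme points of that ball. -/
theorem mem_closedBall_eq_mean_extremePoints {Γ : Type*} (X : Γ → Type*)
    [∀ γ, NormedAddCommGroup (X γ)] [∀ γ, NormedSpace ℝ (X γ)] [∀ γ, CompleteSpace (X γ)]
    [∀ γ, StrictConvexSpace ℝ (X γ)]
    (hdim : ∀ γ, 2 ≤ Module.rank ℝ (X γ))
    (z : lp X ∞) (hz : z ∈ Metric.closedBall (0 : lp X ∞) 1) :
    ∃ p ∈ Set.extremePoints ℝ (Metric.closedBall (0 : lp X ∞) 1),
      ∃ q ∈ Set.extremePoints ℝ (Metric.closedBall (0 : lp X ∞) 1),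
        z = (1 / 2 : ℝ) • (p + q) := by
  have hz' : ∀ γ, ‖z γ‖ ≤ 1 := by
    intro γ
    have := lp.norm_apply_le_norm (p := ∞) (by norm_num) z γ
    rw [Metric.mem_closedBall, dist_zero_right] at hz
    linarith
  have hrank : ∀ γ, 1 < Module.rank ℝ (X γ) := fun γ =>
    lt_of_lt_of_le (by norm_num) (hdim γ)
  have hkey : ∀ γ, ∃ p : X γ, ‖p‖ = 1 ∧ ‖(2 : ℝ) • z γ - p‖ = 1 := fun γ =>
    exists_unit_pair_aux (hrank γ) (hz' γ)
  choose pf hpf1 hpf2 using hkey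
  have hpmem : Memℓp pf ∞ := memℓp_infty ⟨1, by rintro x ⟨γ, rfl⟩; exact (hpf1 γ).le⟩
  set p : lp X ∞ := ⟨pf, hpmem⟩ with hp_def
  set q : lp X ∞ := (2 : ℝ) • z - p with hq_def
  have hq_apply : ∀ γ, q γ = (2 : ℝ) • z γ - pf γ := by
    intro γ
    rw [hq_def]
    simp [lp.coeFn_sub, lp.coeFn_smul, hp_def]
    rfl
  have hp_apply : ∀ γ, p γ = pf γ := fun γ => rfl
  refine ⟨p, extreme_of_forall_norm_eq_one p (fun γ => by rw [hp_apply]; exact hpf1 γ),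
    q, extreme_of_forall_norm_eq_one q (fun γ => by rw [hq_apply]; exact hpf2 γ), ?_⟩
  have : p + q = (2 : ℝ) • z := by
    rw [hq_def]; abel
  rw [this, smul_smul]
  norm_num
end

section
/- Let (X_γ)_{γ∈Γ} be a family of real strictly convex Banach spaces with dim X_γ ≥ 2 for every γ ∈ Γ, and let Z_∞ = ⊕_{γ∈Γ}^{ℓ∞} X_γ. Then every convex body in Z_∞ satisfies the strong Mankiewicz property: every surjective isometry from a convex body C ⊆ Z_∞ onto an arbitrary convex subset L of an arbitrary real normed space Y is affine. -/
set_option maxHeartbeats 1000000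

open scoped ENNReal
open Metric Set

section StrongMankiewiczAux

variable {Γ : Type*} {X : Γ → Type*} [∀ γ, NormedAddCommGroup (X γ)] [∀ γ, NormedSpace ℝ (X γ)]

/-- In a normed space of dimension ≥ 2, for any `d` with `‖d‖ ≤ 2R` there is `z` with
`‖z‖ = R` and `‖d + z‖ = R`. -/
lemma sphere_decomp {E : Type*} [NormedAddCommGroup E] [NormedSpace ℝ E]
    (hdim : 2 ≤ Module.rank ℝ E) {d : E} {R : ℝ} (hd : ‖d‖ ≤ 2 * R) :
    ∃ z : E, ‖z‖ = R ∧ ‖d + z‖ = R := by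
  have hR : 0 ≤ R := by nlinarith [norm_nonneg d]
  have hrank : 1 < Module.rank ℝ E := lt_of_lt_of_le Cardinal.one_lt_two hdim
  have hconn : IsConnected (sphere (0 : E) R) := isConnected_sphere hrank 0 hR
  have hcont : ContinuousOn (fun z : E => ‖d + z‖) (sphere (0 : E) R) :=
    (continuous_norm.comp (continuous_const.add continuous_id)).continuousOn
  rcases eq_or_ne d 0 with rfl | hd0
  · obtain ⟨z, hz⟩ := hconn.nonempty
    exact ⟨z, mem_sphere_zero_iff_norm.mp hz, by
      simp only [zero_add]; exact mem_sphere_zero_iff_norm.mp hz⟩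
  · have hdn : 0 < ‖d‖ := norm_pos_iff.mpr hd0
    set u : E := (R / ‖d‖) • d with hu
    have hu_mem : u ∈ sphere (0 : E) R := by
      rw [mem_sphere_zero_iff_norm, hu, norm_smul, Real.norm_eq_abs,
        abs_of_nonneg (div_nonneg hR hdn.le), div_mul_cancel₀ _ hdn.ne']
    have hnu_mem : -u ∈ sphere (0 : E) R := by
      rw [mem_sphere_zero_iff_norm, norm_neg]
      exact mem_sphere_zero_iff_norm.mp hu_mem
    have h1 : ‖d + -u‖ ≤ R := by
      rw [hu, ← sub_eq_add_neg]
      have : d - (R / ‖d‖) • d = (1 - R / ‖d‖) • d := by module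
      rw [this, norm_smul, Real.norm_eq_abs]
      rcases abs_cases (1 - R / ‖d‖) with ⟨h, _⟩ | ⟨h, _⟩ <;> rw [h]
      · rw [sub_mul, one_mul, div_mul_cancel₀ _ hdn.ne']
        linarith
      · rw [neg_sub, sub_mul, one_mul, div_mul_cancel₀ _ hdn.ne']
        linarith
    have h2 : R ≤ ‖d + u‖ := by
      have : d + u = (1 + R / ‖d‖) • d := by rw [hu]; module
      rw [this, norm_smul, Real.norm_eq_abs,
        abs_of_nonneg (by positivity : (0:ℝ) ≤ 1 + R / ‖d‖)]
      rw [add_mul, one_mul, div_mul_cancel₀ _ hdn.ne']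
      linarith [hdn]
    have := hconn.isPreconnected.intermediate_value hnu_mem hu_mem hcont
      (Set.mem_Icc.mpr ⟨h1, h2⟩)
    obtain ⟨z, hz_mem, hz⟩ := this
    exact ⟨z, mem_sphere_zero_iff_norm.mp hz_mem, hz⟩

/-- flat decomposition in an ℓ∞-sum -/
lemma flat_decomp (hdim : ∀ γ, 2 ≤ Module.rank ℝ (X γ)) (v : lp X ∞) {R : ℝ}
    (hv : ‖v‖ ≤ 2 * R) :
    ∃ z : lp X ∞, (∀ γ, ‖z γ‖ = R) ∧ (∀ γ, ‖v γ + z γ‖ = R) := by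
  have hco : ∀ γ, ∃ z : X γ, ‖z‖ = R ∧ ‖v γ + z‖ = R := fun γ =>
    sphere_decomp (hdim γ) ((lp.norm_apply_le_norm ENNReal.top_ne_zero v γ).trans hv)
  choose zf hz1 hz2 using hco
  have hmem : Memℓp zf ∞ := memℓp_infty ⟨R, by rintro x ⟨γ, rfl⟩; exact (hz1 γ).le⟩
  exact ⟨⟨zf, hmem⟩, hz1, hz2⟩

/-- unique metric midpoint along flat directions -/
lemma flat_midpoint_unique [∀ γ, StrictConvexSpace ℝ (X γ)]
    {p q m : lp X ∞} {r : ℝ} (hd : ∀ γ, ‖(q - p : lp X ∞) γ‖ = 2 * r)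
    (h1 : ‖m - p‖ ≤ r) (h2 : ‖m - q‖ ≤ r) : m = (2⁻¹ : ℝ) • (p + q) := by
  have hr : 0 ≤ r := le_trans (norm_nonneg _) h1
  apply lp.ext
  funext γ
  have ha : ‖m γ - p γ‖ ≤ r := by
    have := lp.norm_apply_le_norm ENNReal.top_ne_zero (m - p) γ
    rw [lp.coeFn_sub, Pi.sub_apply] at this
    exact this.trans h1
  have hb : ‖q γ - m γ‖ ≤ r := by
    have := lp.norm_apply_le_norm ENNReal.top_ne_zero (m - q) γ
    rw [lp.coeFn_sub, Pi.sub_apply] at this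
    rw [norm_sub_rev]
    exact this.trans h2
  have hab : ‖(m γ - p γ) + (q γ - m γ)‖ = 2 * r := by
    have := hd γ
    rw [lp.coeFn_sub, Pi.sub_apply] at this
    rw [show (m γ - p γ) + (q γ - m γ) = q γ - p γ by abel]
    exact this
  have heqr : ‖m γ - p γ‖ = r ∧ ‖q γ - m γ‖ = r := by
    constructor <;> nlinarith [norm_add_le (m γ - p γ) (q γ - m γ)]
  have heq : m γ - p γ = q γ - m γ := by
    rcases eq_or_lt_of_le hr with hr0 | hrpos
    · have e1 : m γ - p γ = 0 := norm_eq_zero.mp (by rw [heqr.1, ← hr0])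
      have e2 : q γ - m γ = 0 := norm_eq_zero.mp (by rw [heqr.2, ← hr0])
      rw [e1, e2]
    · exact eq_of_norm_eq_of_norm_add_eq (by rw [heqr.1, heqr.2])
        (by rw [hab, heqr.1, heqr.2]; ring)
  have : (((2:ℝ)⁻¹ • (p + q) : lp X ∞) : ∀ γ, X γ) γ = (2:ℝ)⁻¹ • (p γ + q γ) := by
    rw [lp.coeFn_smul, Pi.smul_apply, lp.coeFn_add, Pi.add_apply]
  rw [this]
  have : (2:ℝ) • (m γ) = (2:ℝ) • ((2:ℝ)⁻¹ • (p γ + q γ)) := by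
    rw [smul_inv_smul₀ (by norm_num : (2:ℝ) ≠ 0)]
    have : m γ + m γ = p γ + q γ := by
      have := heq
      rw [sub_eq_sub_iff_add_eq_add] at this
      linear_combination (norm := abel) this
    rw [two_smul]
    exact this
  exact smul_right_injective _ (by norm_num : (2:ℝ) ≠ 0) this

variable [∀ γ, StrictConvexSpace ℝ (X γ)]
  {Y : Type*} [NormedAddCommGroup Y] [NormedSpace ℝ Y]
  {C : Set (lp X ∞)} {L : Set Y} {Δ : lp X ∞ → Y}

/-- Step 1: midpoint preservation along flat directions. -/
lemma flat_mid_preserved (hL : Convex ℝ L)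
    (hiso : ∀ a ∈ C, ∀ b ∈ C, dist (Δ a) (Δ b) = dist a b)
    (himage : Δ '' C = L) {p q : lp X ∞} (hp : p ∈ C) (hq : q ∈ C)
    {r : ℝ} (hr : 0 ≤ r) (hflat : ∀ γ, ‖(q - p : lp X ∞) γ‖ = 2 * r) :
    (2⁻¹ : ℝ) • (p + q) ∈ C ∧ Δ ((2⁻¹ : ℝ) • (p + q)) = (2⁻¹ : ℝ) • (Δ p + Δ q) := by
  have hpL : Δ p ∈ L := himage ▸ Set.mem_image_of_mem Δ hp
  have hqL : Δ q ∈ L := himage ▸ Set.mem_image_of_mem Δ hq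
  have hlmem : (2⁻¹ : ℝ) • Δ p + (2⁻¹ : ℝ) • Δ q ∈ L :=
    hL hpL hqL (by norm_num) (by norm_num) (by norm_num)
  rw [← himage] at hlmem
  obtain ⟨m, hmC, hm⟩ := hlmem
  have hqp : ‖q - p‖ ≤ 2 * r :=
    lp.norm_le_of_forall_le (by linarith) fun γ => (hflat γ).le
  have hd1 : ‖m - p‖ ≤ r := by
    rw [← dist_eq_norm, ← hiso m hmC p hp, dist_eq_norm, hm,
      show (2⁻¹ : ℝ) • Δ p + (2⁻¹ : ℝ) • Δ q - Δ p = (2⁻¹ : ℝ) • (Δ q - Δ p) by module,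
      norm_smul]
    have : ‖Δ q - Δ p‖ ≤ 2 * r := by
      rw [← dist_eq_norm, hiso q hq p hp, dist_eq_norm]; exact hqp
    rw [Real.norm_eq_abs]
    rw [abs_of_nonneg (by norm_num : (0:ℝ) ≤ 2⁻¹)]
    linarith
  have hd2 : ‖m - q‖ ≤ r := by
    rw [← dist_eq_norm, ← hiso m hmC q hq, dist_eq_norm, hm,
      show (2⁻¹ : ℝ) • Δ p + (2⁻¹ : ℝ) • Δ q - Δ q = (2⁻¹ : ℝ) • (Δ p - Δ q) by module,
      norm_smul]
    have : ‖Δ p - Δ q‖ ≤ 2 * r := by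
      rw [← dist_eq_norm, hiso p hp q hq, dist_eq_norm, ← norm_neg,
        show -(p - q) = q - p by abel]
      exact hqp
    rw [Real.norm_eq_abs, abs_of_nonneg (by norm_num : (0:ℝ) ≤ 2⁻¹)]
    linarith
  have hmid := flat_midpoint_unique hflat hd1 hd2
  rw [← hmid]
  exact ⟨hmC, by rw [hm]; module⟩

/-- The key lemma: midpoint preservation for pairs with enough room. -/
lemma midpoint_preserved_ball (hdim : ∀ γ, 2 ≤ Module.rank ℝ (X γ)) (hL : Convex ℝ L)
    (hiso : ∀ a ∈ C, ∀ b ∈ C, dist (Δ a) (Δ b) = dist a b)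
    (himage : Δ '' C = L) {p q : lp X ∞} (hp : p ∈ C) (hq : q ∈ C)
    (hball : closedBall ((2⁻¹ : ℝ) • (p + q)) (‖q - p‖ / 2) ⊆ C) :
    Δ ((2⁻¹ : ℝ) • (p + q)) = (2⁻¹ : ℝ) • (Δ p + Δ q) := by
  rcases eq_or_ne q p with rfl | hne
  · have h1 : (2⁻¹ : ℝ) • (q + q) = q := by
      rw [← two_smul ℝ q, smul_smul]; norm_num
    have h2 : (2⁻¹ : ℝ) • (Δ q + Δ q) = Δ q := by
      rw [← two_smul ℝ (Δ q), smul_smul]; norm_num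
    rw [h1, h2]
  set v : lp X ∞ := q - p with hv
  have hvne : v ≠ 0 := sub_ne_zero.mpr hne
  set R : ℝ := ‖v‖ / 2 with hR
  have hRpos : 0 < R := div_pos (norm_pos_iff.mpr hvne) two_pos
  obtain ⟨z, hz1, hz2⟩ := flat_decomp hdim v (R := R) (by rw [hR]; linarith [norm_nonneg v])
  set w : lp X ∞ := v + z with hw
  have hwγ : ∀ γ, ‖w γ‖ = R := by
    intro γ
    rw [hw, lp.coeFn_add, Pi.add_apply]
    exact hz2 γ
  have hznorm : ‖z‖ ≤ R := lp.norm_le_of_forall_le hRpos.le fun γ => (hz1 γ).le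
  set m₀ : lp X ∞ := (2⁻¹ : ℝ) • (p + q) with hm₀
  -- the six points
  set P1 : lp X ∞ := p - z with hP1
  set P2 : lp X ∞ := q + z with hP2
  set Qp : lp X ∞ := m₀ - (2⁻¹ : ℝ) • z with hQp
  set Qm : lp X ∞ := m₀ + (2⁻¹ : ℝ) • z with hQm
  -- memberships
  have hmem : ∀ x : lp X ∞, ‖x - m₀‖ ≤ R → x ∈ C := by
    intro x hx
    exact hball (by rwa [mem_closedBall, dist_eq_norm])
  have hP1C : P1 ∈ C := by
    apply hmem
    have : P1 - m₀ = (-(2⁻¹ : ℝ)) • w + (-(2⁻¹ : ℝ)) • z := by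
      rw [hP1, hm₀, hw, hv]; module
    rw [this]
    refine lp.norm_le_of_forall_le hRpos.le fun γ => ?_
    have : ((-(2⁻¹ : ℝ)) • w + (-(2⁻¹ : ℝ)) • z : lp X ∞) γ
        = (-(2⁻¹ : ℝ)) • w γ + (-(2⁻¹ : ℝ)) • z γ := by
      rw [lp.coeFn_add, Pi.add_apply, lp.coeFn_smul, Pi.smul_apply, lp.coeFn_smul, Pi.smul_apply]
    rw [this]
    calc ‖(-(2⁻¹ : ℝ)) • w γ + (-(2⁻¹ : ℝ)) • z γ‖
        ≤ ‖(-(2⁻¹ : ℝ)) • w γ‖ + ‖(-(2⁻¹ : ℝ)) • z γ‖ := norm_add_le _ _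
      _ = 2⁻¹ * ‖w γ‖ + 2⁻¹ * ‖z γ‖ := by
          simp [norm_smul]
      _ ≤ R := by rw [hwγ γ, hz1 γ]; ring_nf; linarith
  have hP2C : P2 ∈ C := by
    apply hmem
    have : P2 - m₀ = (2⁻¹ : ℝ) • w + (2⁻¹ : ℝ) • z := by
      rw [hP2, hm₀, hw, hv]; module
    rw [this]
    refine lp.norm_le_of_forall_le hRpos.le fun γ => ?_
    have : ((2⁻¹ : ℝ) • w + (2⁻¹ : ℝ) • z : lp X ∞) γ
        = (2⁻¹ : ℝ) • w γ + (2⁻¹ : ℝ) • z γ := by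
      rw [lp.coeFn_add, Pi.add_apply, lp.coeFn_smul, Pi.smul_apply, lp.coeFn_smul, Pi.smul_apply]
    rw [this]
    calc ‖(2⁻¹ : ℝ) • w γ + (2⁻¹ : ℝ) • z γ‖
        ≤ ‖(2⁻¹ : ℝ) • w γ‖ + ‖(2⁻¹ : ℝ) • z γ‖ := norm_add_le _ _
      _ = 2⁻¹ * ‖w γ‖ + 2⁻¹ * ‖z γ‖ := by
          simp [norm_smul]
      _ ≤ R := by rw [hwγ γ, hz1 γ]; ring_nf; linarith
  have hQpC : Qp ∈ C := by
    apply hmem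
    rw [hQp, show m₀ - (2⁻¹ : ℝ) • z - m₀ = (-(2⁻¹ : ℝ)) • z by module, norm_smul,
      Real.norm_eq_abs]
    calc |(-(2⁻¹:ℝ))| * ‖z‖ = 2⁻¹ * ‖z‖ := by norm_num
      _ ≤ R := by linarith
  have hQmC : Qm ∈ C := by
    apply hmem
    rw [hQm, show m₀ + (2⁻¹ : ℝ) • z - m₀ = (2⁻¹ : ℝ) • z by module, norm_smul,
      Real.norm_eq_abs]
    calc |((2⁻¹:ℝ))| * ‖z‖ = 2⁻¹ * ‖z‖ := by norm_num
      _ ≤ R := by linarith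
  have hpC' : p ∈ C := hp
  have hqC' : q ∈ C := hq
  -- Step 1 applications
  have hflat1 : ∀ γ, ‖(q - P1 : lp X ∞) γ‖ = 2 * (2⁻¹ * R) := by
    intro γ
    rw [show (q - P1 : lp X ∞) = w by rw [hP1, hw, hv]; abel]
    rw [hwγ γ]; ring
  have hmid1 := flat_mid_preserved hL hiso himage hP1C hq (by positivity) hflat1
  have hQp_eq : (2⁻¹ : ℝ) • (P1 + q) = Qp := by rw [hP1, hQp, hm₀]; module
  rw [hQp_eq] at hmid1
  have hflat2 : ∀ γ, ‖(P2 - p : lp X ∞) γ‖ = 2 * (2⁻¹ * R) := by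
    intro γ
    rw [show (P2 - p : lp X ∞) = w by rw [hP2, hw, hv]; abel]
    rw [hwγ γ]; ring
  have hmid2 := flat_mid_preserved hL hiso himage hp hP2C (by positivity) hflat2
  have hQm_eq : (2⁻¹ : ℝ) • (p + P2) = Qm := by rw [hP2, hQm, hm₀]; module
  rw [hQm_eq] at hmid2
  -- the pulled-back point
  have hpL : Δ p ∈ L := himage ▸ Set.mem_image_of_mem Δ hp
  have hqL : Δ q ∈ L := himage ▸ Set.mem_image_of_mem Δ hq
  have hlmem : (2⁻¹ : ℝ) • Δ p + (2⁻¹ : ℝ) • Δ q ∈ L :=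
    hL hpL hqL (by norm_num) (by norm_num) (by norm_num)
  rw [← himage] at hlmem
  obtain ⟨m, hmC, hm⟩ := hlmem
  -- distance computations
  have hdist1 : ‖m - Qp‖ ≤ 2⁻¹ * R := by
    rw [← dist_eq_norm, ← hiso m hmC Qp hQpC, dist_eq_norm, hm, hmid1.2,
      show (2⁻¹ : ℝ) • Δ p + (2⁻¹ : ℝ) • Δ q - (2⁻¹ : ℝ) • (Δ P1 + Δ q)
        = (2⁻¹ : ℝ) • (Δ p - Δ P1) by module, norm_smul, Real.norm_eq_abs]
    have : ‖Δ p - Δ P1‖ = ‖z‖ := by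
      rw [← dist_eq_norm, hiso p hp P1 hP1C, dist_eq_norm,
        show (p - P1 : lp X ∞) = z by rw [hP1]; abel]
    rw [this, abs_of_nonneg (by norm_num : (0:ℝ) ≤ 2⁻¹)]
    nlinarith
  have hdist2 : ‖m - Qm‖ ≤ 2⁻¹ * R := by
    rw [← dist_eq_norm, ← hiso m hmC Qm hQmC, dist_eq_norm, hm, hmid2.2,
      show (2⁻¹ : ℝ) • Δ p + (2⁻¹ : ℝ) • Δ q - (2⁻¹ : ℝ) • (Δ p + Δ P2)
        = (2⁻¹ : ℝ) • (Δ q - Δ P2) by module, norm_smul, Real.norm_eq_abs]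
    have : ‖Δ q - Δ P2‖ = ‖z‖ := by
      rw [← dist_eq_norm, hiso q hq P2 hP2C, dist_eq_norm,
        show (q - P2 : lp X ∞) = -z by rw [hP2]; abel, norm_neg]
    rw [this, abs_of_nonneg (by norm_num : (0:ℝ) ≤ 2⁻¹)]
    nlinarith
  -- uniqueness
  have hflat3 : ∀ γ, ‖(Qm - Qp : lp X ∞) γ‖ = 2 * (2⁻¹ * R) := by
    intro γ
    rw [show (Qm - Qp : lp X ∞) = z by rw [hQm, hQp]; module]
    rw [hz1 γ]; ring
  have hmuniq := flat_midpoint_unique hflat3 hdist1 hdist2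
  have : m = m₀ := by
    rw [hmuniq, hQp, hQm]; module
  rw [← this, hm, smul_add]

/-- Affinity of `Δ` on segments contained in the interior of `C`. -/
lemma seg_affine (hdim : ∀ γ, 2 ≤ Module.rank ℝ (X γ)) (hL : Convex ℝ L)
    (hiso : ∀ a ∈ C, ∀ b ∈ C, dist (Δ a) (Δ b) = dist a b)
    (himage : Δ '' C = L) {p q : lp X ∞}
    (hseg : ∀ t ∈ Icc (0:ℝ) 1, p + t • (q - p) ∈ interior C) :
    ∀ t ∈ Icc (0:ℝ) 1, Δ (p + t • (q - p)) = Δ p + t • (Δ q - Δ p) := by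
  set v : lp X ∞ := q - p with hv
  set P : ℝ → lp X ∞ := fun t => p + t • v with hP
  have hPC : ∀ t ∈ Icc (0:ℝ) 1, P t ∈ C := fun t ht => interior_subset (hseg t ht)
  have hP0 : P 0 = p := by rw [hP]; simp
  have hP1 : P 1 = q := by rw [hP, hv]; simp
  rcases eq_or_ne v 0 with hv0 | hvne
  · have hqp : q = p := by rwa [hv, sub_eq_zero] at hv0
    intro t ht
    rw [hv, hqp]
    simp
  have hV : 0 < ‖v‖ := norm_pos_iff.mpr hvne
  set g : ℝ → Y := fun t => Δ (P t) with hg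
  set φ : ℝ → Y := fun t => g t - g 0 - t • (g 1 - g 0) with hφ
  have hgdist : ∀ s ∈ Icc (0:ℝ) 1, ∀ t ∈ Icc (0:ℝ) 1,
      dist (g s) (g t) = ‖v‖ * dist s t := by
    intro s hs t ht
    rw [hg]
    simp only
    rw [hiso _ (hPC s hs) _ (hPC t ht), dist_eq_norm,
      show P s - P t = (s - t) • v by rw [hP]; module, norm_smul, Real.norm_eq_abs,
      Real.dist_eq, mul_comm]
  have hgcont : ContinuousOn g (Icc (0:ℝ) 1) := by
    apply LipschitzOnWith.continuousOn (K := ‖v‖₊)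
    rw [lipschitzOnWith_iff_dist_le_mul]
    intro s hs t ht
    rw [hgdist s hs t ht]
    simp [coe_nnnorm]
  have hφcont : ContinuousOn φ (Icc (0:ℝ) 1) := by
    apply ContinuousOn.sub (hgcont.sub continuousOn_const)
    exact (continuousOn_id).smul continuousOn_const
  have hφ0 : φ 0 = 0 := by rw [hφ]; simp
  have hφ1 : φ 1 = 0 := by rw [hφ]; simp
  have hkey : ∀ ε > (0:ℝ), ∀ t ∈ Icc (0:ℝ) 1, ‖φ t‖ + ε * (t * (t - 1)) ≤ 0 := by
    intro ε hε
    set χ : ℝ → ℝ := fun t => ‖φ t‖ + ε * (t * (t - 1)) with hχ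
    have hχcont : ContinuousOn χ (Icc (0:ℝ) 1) := by
      apply ContinuousOn.add hφcont.norm
      exact (continuous_const.mul (continuous_id.mul (continuous_id.sub continuous_const))).continuousOn
    obtain ⟨ts, hts, hmax⟩ := isCompact_Icc.exists_isMaxOn (by
      exact ⟨0, by norm_num⟩) hχcont
    have hmax' : ∀ t ∈ Icc (0:ℝ) 1, χ t ≤ χ ts := fun t ht => hmax ht
    intro t ht
    have h0 : (0:ℝ) ∈ Icc (0:ℝ) 1 := by norm_num
    have h1 : (1:ℝ) ∈ Icc (0:ℝ) 1 := by norm_num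
    have hχ0 : χ 0 = 0 := by rw [hχ]; simp [hφ0]
    have hχ1 : χ 1 = 0 := by rw [hχ]; simp [hφ1]
    have hts0 : χ ts ≤ 0 := by
      rcases eq_or_lt_of_le hts.1 with h | htsl
      · rw [← h]; exact hχ0.le
      rcases eq_or_lt_of_le hts.2 with h | htsr
      · rw [h]; exact hχ1.le
      exfalso
      -- interior point: get a ball
      obtain ⟨r, hr, hrball⟩ := Metric.isOpen_iff.mp isOpen_interior (P ts) (hseg ts hts)
      set h : ℝ := min (min ts (1 - ts)) (r / (2 * ‖v‖)) with hh
      have hhpos : 0 < h := by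
        apply lt_min (lt_min htsl (by linarith))
        positivity
      have hsI : ts - h ∈ Icc (0:ℝ) 1 := by
        constructor
        · have : h ≤ ts := le_trans (min_le_left _ _) (min_le_left _ _)
          linarith
        · have := hts.2; linarith
      have huI : ts + h ∈ Icc (0:ℝ) 1 := by
        constructor
        · have := hts.1; linarith
        · have : h ≤ 1 - ts := le_trans (min_le_left _ _) (min_le_right _ _)
          linarith
      have hmid_eq : (2⁻¹ : ℝ) • (P (ts - h) + P (ts + h)) = P ts := by
        rw [hP]; simp only; module
      have hdiff : ‖P (ts + h) - P (ts - h)‖ / 2 = h * ‖v‖ := by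
        rw [show P (ts + h) - P (ts - h) = (2 * h) • v by rw [hP]; simp only; module,
          norm_smul, Real.norm_eq_abs, abs_of_pos (by linarith : (0:ℝ) < 2 * h)]
        ring
      have hball' : closedBall ((2⁻¹ : ℝ) • (P (ts - h) + P (ts + h)))
          (‖P (ts + h) - P (ts - h)‖ / 2) ⊆ C := by
        rw [hmid_eq, hdiff]
        refine subset_trans (closedBall_subset_ball ?_) (subset_trans hrball interior_subset)
        have : h ≤ r / (2 * ‖v‖) := min_le_right _ _
        calc h * ‖v‖ ≤ (r / (2 * ‖v‖)) * ‖v‖ := by nlinarith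
          _ = r / 2 := by field_simp
          _ < r := by linarith
      have hmb := midpoint_preserved_ball hdim hL hiso himage (hPC _ hsI) (hPC _ huI) hball'
      rw [hmid_eq] at hmb
      have hmbg : g ts = (2⁻¹ : ℝ) • (g (ts - h) + g (ts + h)) := hmb
      -- φ relation
      have hφrel : φ ts = (2⁻¹ : ℝ) • (φ (ts - h) + φ (ts + h)) := by
        rw [hφ]
        simp only
        rw [hmbg]
        module
      have hnorm : ‖φ ts‖ ≤ 2⁻¹ * ‖φ (ts - h)‖ + 2⁻¹ * ‖φ (ts + h)‖ := by
        rw [hφrel, smul_add]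
        refine le_trans (norm_add_le _ _) ?_
        rw [norm_smul, norm_smul]
        simp only [Real.norm_eq_abs]
        rw [abs_of_nonneg (by norm_num : (0:ℝ) ≤ 2⁻¹)]
      have hA := hmax' _ hsI
      have hB := hmax' _ huI
      rw [hχ] at hA hB
      simp only at hA hB
      nlinarith [hA, hB, hnorm, mul_pos hε (mul_pos hhpos hhpos)]
    calc χ t ≤ χ ts := hmax' t ht
      _ ≤ 0 := hts0
  -- conclude φ = 0
  intro t ht
  have hφt : φ t = 0 := by
    have : ‖φ t‖ ≤ 0 := by
      by_contra hcon
      push_neg at hcon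
      have h4 : 0 < t * (1 - t) + 1 := by nlinarith [ht.1, ht.2]
      set ε : ℝ := ‖φ t‖ / (t * (1 - t) + 1) with hε
      have hεpos : 0 < ε := by positivity
      have := hkey ε hεpos t ht
      rw [hε] at this
      have hexp : ‖φ t‖ + ‖φ t‖ / (t * (1 - t) + 1) * (t * (t - 1)) 
          = ‖φ t‖ * (1 / (t * (1 - t) + 1)) := by
        field_simp
        ring
      have h5 : 0 < 1 / (t * (1 - t) + 1) := by positivity
      rw [hexp] at this
      nlinarith [this, h5, hcon]
    exact norm_le_zero_iff.mp this
  have : g t = g 0 + t • (g 1 - g 0) := by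
    have := hφt
    rw [hφ] at this
    simp only at this
    rw [sub_sub, sub_eq_zero] at this
    rw [this]
  rw [hg] at this
  simp only at this
  rw [hP0, hP1] at this
  exact this


end StrongMankiewiczAux


/-- Every convex body in the ℓ∞-sum of a family of strictly convex real Banach spaces of
dimension at least 2 satisfies the strong Mankiewicz property: every surjective isometry
from such a convex body `C` onto an arbitrary convex subset `L` of an arbitrary real
normed space `Y` is affine. -/
theorem convexBody_strongMankiewicz {Γ : Type*} (X : Γ → Type*)
    [∀ γ, NormedAddCommGroup (X γ)] [∀ γ, NormedSpace ℝ (X γ)] [∀ γ, CompleteSpace (X γ)]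
    [∀ γ, StrictConvexSpace ℝ (X γ)]
    (hdim : ∀ γ, 2 ≤ Module.rank ℝ (X γ))
    (C : Set (lp X ∞)) (hC₁ : IsClosed C) (hC₂ : Convex ℝ C) (hC₃ : (interior C).Nonempty)
    (Y : Type*) [NormedAddCommGroup Y] [NormedSpace ℝ Y]
    (L : Set Y) (hL : Convex ℝ L)
    (Δ : lp X ∞ → Y) (hiso : ∀ a ∈ C, ∀ b ∈ C, dist (Δ a) (Δ b) = dist a b)
    (himage : Δ '' C = L) :
    ∀ a ∈ C, ∀ b ∈ C, ∀ t : ℝ, 0 ≤ t → t ≤ 1 →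
      Δ ((1 - t) • a + t • b) = (1 - t) • Δ a + t • Δ b := by
  intro a ha b hb t ht0 ht1
  obtain ⟨x₀, hx₀⟩ := hC₃
  set c : lp X ∞ := (1 - t) • a + t • b with hc
  have hcC : c ∈ C := hC₂ ha hb (by linarith) ht0 (by ring)
  set K : ℝ := ‖c - x₀‖ + ((1 - t) * ‖a - x₀‖ + t * ‖b - x₀‖) + 1 with hK
  have hKpos : 0 < K := by
    have h1 : 0 ≤ ‖c - x₀‖ := norm_nonneg _
    have h2 : 0 ≤ (1 - t) * ‖a - x₀‖ := mul_nonneg (by linarith) (norm_nonneg _)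
    have h3 : 0 ≤ t * ‖b - x₀‖ := mul_nonneg ht0 (norm_nonneg _)
    rw [hK]; linarith
  have key : ∀ δ > (0:ℝ), ‖Δ c - ((1 - t) • Δ a + t • Δ b)‖ ≤ δ := by
    intro δ hδ
    set τ : ℝ := max 0 (1 - δ / K) with hτ
    have hτ0 : 0 ≤ τ := le_max_left _ _
    have hτ1 : τ < 1 :=
      max_lt one_pos (by have : 0 < δ / K := div_pos hδ hKpos; linarith)
    have hτδ : (1 - τ) * K ≤ δ := by
      have h1 : 1 - δ / K ≤ τ := le_max_right _ _
      have h2 : 1 - τ ≤ δ / K := by linarith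
      calc (1 - τ) * K ≤ (δ / K) * K := by nlinarith
        _ = δ := by field_simp
    set aτ : lp X ∞ := (1 - τ) • x₀ + τ • a with haτ
    set bτ : lp X ∞ := (1 - τ) • x₀ + τ • b with hbτ
    have hseg : ∀ s ∈ Icc (0:ℝ) 1, aτ + s • (bτ - aτ) ∈ interior C := by
      intro s hs
      have heq : aτ + s • (bτ - aτ) = (1 - τ) • x₀ + τ • ((1 - s) • a + s • b) := by
        rw [haτ, hbτ]; module
      rw [heq]
      exact hC₂.combo_interior_closure_mem_interior hx₀
        (subset_closure (hC₂ ha hb (by linarith [hs.1, hs.2]) hs.1 (by ring)))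
        (by linarith) hτ0 (by ring)
    have haff := seg_affine hdim hL hiso himage hseg t ⟨ht0, ht1⟩
    set cτ : lp X ∞ := aτ + t • (bτ - aτ) with hcτ
    have hcτC : cτ ∈ C := interior_subset (hseg t ⟨ht0, ht1⟩)
    have haτC : aτ ∈ C := hC₂ (interior_subset hx₀) ha (by linarith) hτ0 (by ring)
    have hbτC : bτ ∈ C := hC₂ (interior_subset hx₀) hb (by linarith) hτ0 (by ring)
    have hdecomp : Δ c - ((1 - t) • Δ a + t • Δ b)
        = (Δ c - Δ cτ) + (Δ cτ - (Δ aτ + t • (Δ bτ - Δ aτ)))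
          + ((1 - t) • (Δ aτ - Δ a) + t • (Δ bτ - Δ b)) := by rw [haff]; module
    have hdecomp' : Δ c - ((1 - t) • Δ a + t • Δ b)
        = (Δ c - Δ cτ) + ((1 - t) • (Δ aτ - Δ a) + t • (Δ bτ - Δ b)) := by
      rw [hdecomp, haff]; module
    rw [hdecomp']
    have e1 : ‖Δ c - Δ cτ‖ = (1 - τ) * ‖c - x₀‖ := by
      rw [← dist_eq_norm, hiso c hcC cτ hcτC, dist_eq_norm,
        show c - cτ = (1 - τ) • (c - x₀) by rw [hcτ, haτ, hbτ, hc]; module,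
        norm_smul, Real.norm_eq_abs, abs_of_nonneg (by linarith)]
    have e2 : ‖Δ aτ - Δ a‖ = (1 - τ) * ‖a - x₀‖ := by
      rw [← dist_eq_norm, hiso aτ haτC a ha, dist_eq_norm,
        show aτ - a = (1 - τ) • (x₀ - a) by rw [haτ]; module,
        norm_smul, Real.norm_eq_abs, abs_of_nonneg (by linarith), norm_sub_rev]
    have e3 : ‖Δ bτ - Δ b‖ = (1 - τ) * ‖b - x₀‖ := by
      rw [← dist_eq_norm, hiso bτ hbτC b hb, dist_eq_norm,
        show bτ - b = (1 - τ) • (x₀ - b) by rw [hbτ]; module,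
        norm_smul, Real.norm_eq_abs, abs_of_nonneg (by linarith), norm_sub_rev]
    calc ‖(Δ c - Δ cτ) + ((1 - t) • (Δ aτ - Δ a) + t • (Δ bτ - Δ b))‖
        ≤ ‖Δ c - Δ cτ‖ + (‖(1 - t) • (Δ aτ - Δ a)‖ + ‖t • (Δ bτ - Δ b)‖) :=
          le_trans (norm_add_le _ _) (by gcongr; exact norm_add_le _ _)
      _ = (1 - τ) * ‖c - x₀‖ + ((1 - t) * ((1 - τ) * ‖a - x₀‖) + t * ((1 - τ) * ‖b - x₀‖)) := by
          rw [e1, norm_smul, norm_smul, e2, e3, Real.norm_eq_abs, Real.norm_eq_abs,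
            abs_of_nonneg (by linarith : (0:ℝ) ≤ 1 - t), abs_of_nonneg ht0]
      _ ≤ (1 - τ) * K := by
          have n1 : (0:ℝ) ≤ ‖c - x₀‖ := norm_nonneg _
          have n2 : (0:ℝ) ≤ ‖a - x₀‖ := norm_nonneg _
          have n3 : (0:ℝ) ≤ ‖b - x₀‖ := norm_nonneg _
          have n4 : (0:ℝ) ≤ (1 - t) * ‖a - x₀‖ := mul_nonneg (by linarith) n2
          have n5 : (0:ℝ) ≤ t * ‖b - x₀‖ := mul_nonneg ht0 n3
          have n6 : (0:ℝ) ≤ 1 - τ := by linarith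
          rw [hK]
          nlinarith [n1, n2, n3, n4, n5, n6]
      _ ≤ δ := hτδ
  have : ‖Δ c - ((1 - t) • Δ a + t • Δ b)‖ ≤ 0 :=
    le_of_forall_pos_le_add (by intro ε hε; simpa using key ε hε)
  have := norm_le_zero_iff.mp this
  rw [sub_eq_zero] at this
  exact this
end

section
/- Let X be a real Banach space with dim X ≥ 2. Then every element x of the closed unit ball of X can be expressed as the mean x = (y + z)/2 of two elements y, z of the unit sphere of X. -/
/-- In a real Banach space of dimension at least 2, every element of the closed unit ball
is the mean of two elements of the unit sphere. -/
theorem mem_closedBall_eq_mean_sphere (X : Type*) [NormedAddCommGroup X] [NormedSpace ℝ X]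
    [CompleteSpace X] (hdim : 2 ≤ Module.rank ℝ X)
    (x : X) (hx : x ∈ Metric.closedBall (0 : X) 1) :
    ∃ y ∈ Metric.sphere (0 : X) 1, ∃ z ∈ Metric.sphere (0 : X) 1,
      x = (1 / 2 : ℝ) • (y + z) := by
  rw [Metric.mem_closedBall, dist_zero_right] at hx
  have hrank : 1 < Module.rank ℝ X := lt_of_lt_of_le (by norm_num) hdim
  by_cases hx0 : x = 0
  · have hnt : Nontrivial X := rank_pos_iff_nontrivial.mp
      (lt_of_lt_of_le (by norm_num) hdim)
    obtain ⟨v, hv⟩ := exists_ne (0 : X)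
    have hvn : 0 < ‖v‖ := norm_pos_iff.mpr hv
    refine ⟨‖v‖⁻¹ • v, ?_, -(‖v‖⁻¹ • v), ?_, ?_⟩
    · simp [Metric.mem_sphere, norm_smul, inv_mul_cancel₀ hvn.ne']
    · simp [Metric.mem_sphere, norm_smul, inv_mul_cancel₀ hvn.ne']
    · simp [hx0]
  · have hxn : 0 < ‖x‖ := norm_pos_iff.mpr hx0
    set y₀ : X := ‖x‖⁻¹ • x with hy₀
    have hy₀n : ‖y₀‖ = 1 := by
      rw [hy₀, norm_smul, norm_inv, norm_norm, inv_mul_cancel₀ hxn.ne']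
    have hy₀mem : y₀ ∈ Metric.sphere (0 : X) 1 := by
      simp [Metric.mem_sphere, hy₀n]
    have hny₀mem : -y₀ ∈ Metric.sphere (0 : X) 1 := by
      simp [Metric.mem_sphere, hy₀n]
    have hconn : IsPreconnected (Metric.sphere (0 : X) 1) :=
      (isPathConnected_sphere hrank 0 zero_le_one).isConnected.isPreconnected
    have hcont : ContinuousOn (fun y : X => ‖(2:ℝ) • x - y‖) (Metric.sphere (0 : X) 1) :=
      (continuous_const.sub continuous_id).norm.continuousOn
    have hsub := hconn.intermediate_value hy₀mem hny₀mem hcont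
    have h1 : ‖(2:ℝ) • x - y₀‖ ≤ 1 := by
      have he : (2:ℝ) • x - y₀ = (2 - ‖x‖⁻¹) • x := by
        rw [hy₀, sub_smul]
      rw [he, norm_smul, Real.norm_eq_abs]
      have hinv : ‖x‖⁻¹ * ‖x‖ = 1 := inv_mul_cancel₀ hxn.ne'
      cases abs_cases (2 - ‖x‖⁻¹) with
      | inl h => rw [h.1]; nlinarith
      | inr h => rw [h.1]; nlinarith
    have h2 : (1:ℝ) ≤ ‖(2:ℝ) • x - -y₀‖ := by
      have he : (2:ℝ) • x - -y₀ = (2 + ‖x‖⁻¹) • x := by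
        rw [hy₀, add_smul, sub_neg_eq_add]
      rw [he, norm_smul, Real.norm_eq_abs]
      have : |2 + ‖x‖⁻¹| = 2 + ‖x‖⁻¹ := abs_of_pos (by positivity)
      rw [this, add_mul, inv_mul_cancel₀ hxn.ne']
      nlinarith
    obtain ⟨y, hymem, hyval⟩ := hsub ⟨h1, h2⟩
    refine ⟨y, hymem, (2:ℝ) • x - y, ?_, ?_⟩
    · simpa [Metric.mem_sphere] using hyval
    · rw [add_sub_cancel, smul_smul]
      norm_num
end

section
/- Let (X_γ)_{γ∈Γ} be a family of real Banach spaces with dim X_γ ≥ 2 for every γ ∈ Γ, and let Z_∞ = ⊕_{γ∈Γ}^{ℓ∞} X_γ. Then every element z of the closed unit ball of Z_∞ can be written as z = (x + y)/2 with x, y ∈ Z_∞ satisfying ‖x(γ)‖_{X_γ} = 1 = ‖y(γ)‖_{X_γ} for all γ ∈ Γ. -/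
open scoped ENNReal

lemma key_midpoint {E : Type*} [NormedAddCommGroup E] [NormedSpace ℝ E]
    (h : 2 ≤ Module.rank ℝ E) (v : E) (hv : ‖v‖ ≤ 1) :
    ∃ u w : E, ‖u‖ = 1 ∧ ‖w‖ = 1 ∧ v = (1 / 2 : ℝ) • (u + w) := by
  have h1 : (1 : Cardinal) < Module.rank ℝ E := lt_of_lt_of_le (by norm_num) h
  have hnt : Nontrivial E := by
    rw [← rank_pos_iff_nontrivial (R := ℝ)]
    exact lt_of_lt_of_le (by norm_num) h
  rcases eq_or_ne v 0 with rfl | hv0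
  · obtain ⟨u, hu⟩ := exists_norm_eq E zero_le_one
    exact ⟨u, -u, hu, by simpa using hu, by simp⟩
  · set a : E := ‖v‖⁻¹ • v with ha
    have hvn : ‖v‖ ≠ 0 := norm_ne_zero_iff.2 hv0
    have hna : ‖a‖ = 1 := by
      rw [ha, norm_smul, norm_inv, norm_norm, inv_mul_cancel₀ hvn]
    have haS : a ∈ Metric.sphere (0:E) 1 := by simpa using hna
    have hbS : -a ∈ Metric.sphere (0:E) 1 := by simpa using hna
    have hconn := isPathConnected_sphere h1 (0:E) zero_le_one |>.isConnected.isPreconnected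
    set f : E → ℝ := fun u => ‖(2:ℝ) • v - u‖ with hf
    have hcont : ContinuousOn f (Metric.sphere (0:E) 1) :=
      (continuous_const.sub continuous_id).norm.continuousOn
    have hfa : f a ≤ 1 := by
      have : (2:ℝ) • v - a = (2 * ‖v‖ - 1) • a := by
        rw [ha]; match_scalars; field_simp
      rw [hf]; simp only
      rw [this, norm_smul, hna, mul_one, Real.norm_eq_abs, abs_sub_le_iff]
      constructor <;> nlinarith [norm_nonneg v]
    have hfb : 1 ≤ f (-a) := by
      have : (2:ℝ) • v - (-a) = (2 * ‖v‖ + 1) • a := by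
        rw [ha]; match_scalars; field_simp; ring
      rw [hf]; simp only
      rw [this, norm_smul, hna, mul_one, Real.norm_eq_abs,
        abs_of_nonneg (by positivity)]
      nlinarith [norm_nonneg v]
    have h1mem : (1:ℝ) ∈ Set.Icc (f a) (f (-a)) := ⟨hfa, hfb⟩
    have := hconn.intermediate_value haS hbS hcont h1mem
    obtain ⟨u, huS, hfu⟩ := this
    refine ⟨u, (2:ℝ) • v - u, by simpa using huS, hfu, ?_⟩
    match_scalars <;> ring

/-- If `(X γ)` is a family of real Banach spaces of dimension at least 2, then every
element `z` of the closed unit ball of the ℓ∞-sum `lp X ∞` can be written as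
`z = (x + y)/2` with `‖x γ‖ = 1 = ‖y γ‖` for every `γ`. -/
theorem mem_closedBall_eq_mean_coordSphere {Γ : Type*} (X : Γ → Type*)
    [∀ γ, NormedAddCommGroup (X γ)] [∀ γ, NormedSpace ℝ (X γ)] [∀ γ, CompleteSpace (X γ)]
    (hdim : ∀ γ, 2 ≤ Module.rank ℝ (X γ))
    (z : lp X ∞) (hz : z ∈ Metric.closedBall (0 : lp X ∞) 1) :
    ∃ x y : lp X ∞, (∀ γ, ‖x γ‖ = 1) ∧ (∀ γ, ‖y γ‖ = 1) ∧ z = (1 / 2 : ℝ) • (x + y) := by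
  have hznorm : ‖z‖ ≤ 1 := by simpa [Metric.mem_closedBall, dist_zero_right] using hz
  have hγ : ∀ γ, ‖z γ‖ ≤ 1 := fun γ =>
    (lp.norm_apply_le_norm ENNReal.top_ne_zero z γ).trans hznorm
  choose u w hu hw hz' using fun γ => key_midpoint (hdim γ) (z γ) (hγ γ)
  have hmu : Memℓp u ∞ := memℓp_infty ⟨1, by rintro - ⟨γ, rfl⟩; exact (hu γ).le⟩
  have hmw : Memℓp w ∞ := memℓp_infty ⟨1, by rintro - ⟨γ, rfl⟩; exact (hw γ).le⟩
  refine ⟨⟨u, hmu⟩, ⟨w, hmw⟩, hu, hw, ?_⟩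
  apply lp.ext
  funext γ
  have : ((1 / 2 : ℝ) • ((⟨u, hmu⟩ : lp X ∞) + ⟨w, hmw⟩)) γ = (1/2 : ℝ) • (u γ + w γ) := by
    rw [lp.coeFn_smul, Pi.smul_apply, lp.coeFn_add, Pi.add_apply]
  rw [this]
  exact hz' γ
end

section
/- Let (X_γ)_{γ∈Γ} be a family of nonzero real Banach spaces each of which is strictly convex, and let Z = ⊕_{γ∈Γ}^{ℓ∞} X_γ. Then for every γ_0 ∈ Γ and every x ∈ S_{X_{γ_0}}, the set A(γ_0, x) := { z ∈ S_Z : z(γ_0) = x } is a maximal convex subset of the unit sphere S_Z, i.e., A(γ_0, x) is convex and is not properly contained in any convex subset of S_Z. -/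
open scoped ENNReal

/-- If `(X γ)` is a family of nonzero strictly convex real Banach spaces and
`Z = lp X ∞` is their ℓ∞-sum, then for every `γ₀` and every norm-one `x ∈ X γ₀`, the set
`A(γ₀, x) = {z ∈ S_Z : z γ₀ = x}` is a maximal convex subset of the unit sphere of `Z`:
it is convex and coincides with any convex subset of the sphere containing it. -/
theorem face_maximal_convex {Γ : Type*} (X : Γ → Type*)
    [∀ γ, NormedAddCommGroup (X γ)] [∀ γ, NormedSpace ℝ (X γ)] [∀ γ, CompleteSpace (X γ)]
    [∀ γ, Nontrivial (X γ)] [∀ γ, StrictConvexSpace ℝ (X γ)]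
    (γ₀ : Γ) (x : X γ₀) (hx : ‖x‖ = 1) :
    Convex ℝ {z : lp X ∞ | z ∈ Metric.sphere (0 : lp X ∞) 1 ∧ z γ₀ = x} ∧
    ∀ C : Set (lp X ∞), C ⊆ Metric.sphere (0 : lp X ∞) 1 → Convex ℝ C →
      {z : lp X ∞ | z ∈ Metric.sphere (0 : lp X ∞) 1 ∧ z γ₀ = x} ⊆ C →
      C = {z : lp X ∞ | z ∈ Metric.sphere (0 : lp X ∞) 1 ∧ z γ₀ = x} := by
  classical
  have hsphere : ∀ z : lp X ∞, z ∈ Metric.sphere (0 : lp X ∞) 1 ↔ ‖z‖ = 1 := by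
    intro z; simp [Metric.mem_sphere, dist_zero_right]
  constructor
  · -- convexity
    rintro z ⟨hz1, hz2⟩ w ⟨hw1, hw2⟩ a b ha hb hab
    rw [hsphere] at hz1 hw1
    have hco : (a • z + b • w) γ₀ = x := by
      rw [lp.coeFn_add, Pi.add_apply, lp.coeFn_smul, lp.coeFn_smul, Pi.smul_apply,
        Pi.smul_apply, hz2, hw2, ← add_smul, hab, one_smul]
    have hle : ‖a • z + b • w‖ ≤ 1 := by
      calc ‖a • z + b • w‖ ≤ ‖a • z‖ + ‖b • w‖ := norm_add_le _ _
        _ = a * ‖z‖ + b * ‖w‖ := by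
            rw [norm_smul, norm_smul, Real.norm_of_nonneg ha, Real.norm_of_nonneg hb]
        _ = 1 := by rw [hz1, hw1]; simpa using hab
    have hge : (1 : ℝ) ≤ ‖a • z + b • w‖ := by
      have := lp.norm_apply_le_norm (E := X) ENNReal.top_ne_zero (a • z + b • w) γ₀
      rw [hco, hx] at this; exact this
    exact ⟨(hsphere _).2 (le_antisymm hle hge), hco⟩
  · intro C hCs hCc hAC
    refine Set.Subset.antisymm ?_ hAC
    intro c hc
    have hcnorm : ‖c‖ = 1 := (hsphere c).1 (hCs hc)
    have hcle : ∀ γ, ‖c γ‖ ≤ 1 := fun γ => by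
      simpa [hcnorm] using lp.norm_apply_le_norm (E := X) ENNReal.top_ne_zero c γ
    -- build the companion point z
    set f : ∀ γ, X γ := Function.update (fun γ => -(c γ)) γ₀ x with hf
    have hfle : ∀ γ, ‖f γ‖ ≤ 1 := by
      intro γ
      rcases eq_or_ne γ γ₀ with rfl | h
      · simp [hf, hx]
      · simp only [hf, Function.update_of_ne h, norm_neg]
        exact hcle γ
    have hmem : Memℓp f ∞ := memℓp_infty ⟨1, by rintro r ⟨γ, rfl⟩; exact hfle γ⟩
    set z : lp X ∞ := ⟨f, hmem⟩ with hzdef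
    have hzapp : ∀ γ, z γ = f γ := fun γ => rfl
    have hzγ₀ : z γ₀ = x := by rw [hzapp, hf]; simp
    have hznorm : ‖z‖ = 1 := by
      refine le_antisymm (lp.norm_le_of_forall_le zero_le_one fun γ => hfle γ) ?_
      have := lp.norm_apply_le_norm (E := X) ENNReal.top_ne_zero z γ₀
      rw [hzγ₀, hx] at this; exact this
    have hzA : z ∈ C := hAC ⟨(hsphere z).2 hznorm, hzγ₀⟩
    -- midpoint
    set m : lp X ∞ := (1/2 : ℝ) • c + (1/2 : ℝ) • z with hm
    have hmC : m ∈ C := hCc hc hzA (by norm_num) (by norm_num) (by norm_num)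
    have hmnorm : ‖m‖ = 1 := (hsphere m).1 (hCs hmC)
    refine ⟨hCs hc, ?_⟩
    by_contra hne
    -- coordinates of m
    have hmγ : ∀ γ, γ ≠ γ₀ → m γ = 0 := by
      intro γ h
      rw [hm, lp.coeFn_add, Pi.add_apply, lp.coeFn_smul, lp.coeFn_smul, Pi.smul_apply,
        Pi.smul_apply, hzapp, hf, Function.update_of_ne h]
      simp [smul_neg]
    have hmγ₀ : m γ₀ = (1/2 : ℝ) • (c γ₀) + (1/2 : ℝ) • x := by
      rw [hm, lp.coeFn_add, Pi.add_apply, lp.coeFn_smul, lp.coeFn_smul, Pi.smul_apply,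
        Pi.smul_apply, hzγ₀]
    have hlt : ‖(1/2 : ℝ) • (c γ₀) + (1/2 : ℝ) • x‖ < 1 :=
      norm_combo_lt_of_ne (hcle γ₀) hx.le hne (by norm_num) (by norm_num) (by norm_num)
    set r : ℝ := ‖(1/2 : ℝ) • (c γ₀) + (1/2 : ℝ) • x‖ with hr
    have hmle : ‖m‖ ≤ r := by
      refine lp.norm_le_of_forall_le (C := r) (by rw [hr]; exact norm_nonneg _) fun γ => ?_
      rcases eq_or_ne γ γ₀ with rfl | h
      · rw [hmγ₀, hr]
      · rw [hmγ γ h, norm_zero, hr]; exact norm_nonneg _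
    rw [hmnorm] at hmle
    exact absurd (lt_of_le_of_lt hmle hlt) (lt_irrefl 1)
end

section
/- Let (X_γ)_{γ∈Γ} be a family of nonzero real Banach spaces each of which is strictly convex, let Z = ⊕_{γ∈Γ}^{ℓ∞} X_γ, let Y be a real Banach space, and let Δ : S_Z → S_Y be a surjective isometry. Then for every γ_0 ∈ Γ and every x_0 ∈ S_{X_{γ_0}}, the set supp(γ_0, x_0) := { ψ ∈ S_{Y*} : ψ^{-1}({1}) ∩ B_Y = Δ(A(γ_0, x_0)) } is nonempty, is closed in the weak* topology of Y*, and is a face of the closed unit ball B_{Y*} of the dual space Y*. -/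
set_option linter.unnecessarySimpa false
set_option linter.unusedSectionVars false

open scoped ENNReal
open Function Metric

namespace TingleyAux

variable {Γ : Type*} {X : Γ → Type*} [∀ γ, NormedAddCommGroup (X γ)]

lemma coord_norm_le (z : lp X ∞) (γ : Γ) : ‖z γ‖ ≤ ‖z‖ :=
  lp.norm_apply_le_norm ENNReal.top_ne_zero z γ

lemma norm_le_of_coords (z : lp X ∞) {C : ℝ} (hC : 0 ≤ C) (h : ∀ γ, ‖z γ‖ ≤ C) : ‖z‖ ≤ C :=
  lp.norm_le_of_forall_le hC h

/-- Build an element of `lp X ∞` from coordinates bounded by 1. -/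
def mkElt (f : ∀ γ, X γ) (h : ∀ γ, ‖f γ‖ ≤ 1) : lp X ∞ :=
  ⟨f, memℓp_infty ⟨1, by rintro r ⟨γ, rfl⟩; exact h γ⟩⟩

@[simp] lemma mkElt_apply (f : ∀ γ, X γ) (h : ∀ γ, ‖f γ‖ ≤ 1) (γ : Γ) :
    (mkElt f h) γ = f γ := rfl

lemma mkElt_norm (f : ∀ γ, X γ) (h : ∀ γ, ‖f γ‖ ≤ 1) (γ₁ : Γ) (h1 : ‖f γ₁‖ = 1) :
    ‖mkElt f h‖ = 1 :=
  le_antisymm (norm_le_of_coords _ zero_le_one h) (h1 ▸ coord_norm_le (mkElt f h) γ₁)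

/-- Build a sphere element of `lp X ∞`. -/
def mkS (f : ∀ γ, X γ) (h : ∀ γ, ‖f γ‖ ≤ 1) (γ₁ : Γ) (h1 : ‖f γ₁‖ = 1) :
    sphere (0 : lp X ∞) 1 :=
  ⟨mkElt f h, by simpa [mem_sphere_zero_iff_norm] using mkElt_norm f h γ₁ h1⟩

@[simp] lemma mkS_apply (f : ∀ γ, X γ) (h : ∀ γ, ‖f γ‖ ≤ 1) (γ₁ : Γ) (h1 : ‖f γ₁‖ = 1)
    (γ : Γ) : ((mkS f h γ₁ h1 : lp X ∞)) γ = f γ := rfl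

/-- In a strictly convex space, two vectors of the closed unit ball at distance 2 are
antipodal unit vectors. -/
lemma antipodal_of_dist_two {W : Type*} [NormedAddCommGroup W] [NormedSpace ℝ W]
    [StrictConvexSpace ℝ W] {p q : W} (hp : ‖p‖ ≤ 1) (hq : ‖q‖ ≤ 1)
    (h : ‖p - q‖ = 2) : p = -q := by
  have h1 : ‖p‖ = 1 ∧ ‖q‖ = 1 := by
    constructor <;> nlinarith [norm_sub_le p q, norm_nonneg p, norm_nonneg q]
  have h2 : ‖p + -q‖ = ‖p‖ + ‖-q‖ := by
    rw [norm_neg, h1.1, h1.2, ← sub_eq_add_neg, h]; norm_num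
  exact eq_of_norm_eq_of_norm_add_eq (x := p) (y := -q) (by rw [norm_neg, h1.1, h1.2]) h2

lemma sphere_coord_le {z : sphere (0 : lp X ∞) 1} (γ : Γ) : ‖(z : lp X ∞) γ‖ ≤ 1 := by
  have := coord_norm_le (z : lp X ∞) γ
  rwa [mem_sphere_zero_iff_norm.mp z.2] at this

section Beta

variable {Y : Type*} [NormedAddCommGroup Y] [NormedSpace ℝ Y]
variable (Δ : sphere (0 : lp X ∞) 1 → sphere (0 : Y) 1)
  (hiso : Isometry Δ) (hsurj : Function.Surjective Δ)

/-- The antipode, as a map of the sphere. -/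
def negS {W : Type*} [NormedAddCommGroup W] (y : sphere (0 : W) 1) : sphere (0 : W) 1 :=
  ⟨-(y : W), by simpa [mem_sphere_zero_iff_norm] using mem_sphere_zero_iff_norm.mp y.2⟩

@[simp] lemma negS_coe {W : Type*} [NormedAddCommGroup W] (y : sphere (0 : W) 1) :
    ((negS y : sphere (0 : W) 1) : W) = -(y : W) := rfl

/-- The conjugate of the antipodal map under `Δ`. -/
noncomputable def beta : sphere (0 : lp X ∞) 1 → sphere (0 : lp X ∞) 1 :=
  fun z => surjInv hsurj (negS (Δ z))

variable {Δ}

lemma Δ_beta (z : sphere (0 : lp X ∞) 1) :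
    (Δ (beta Δ hsurj z) : Y) = -(Δ z : Y) := by
  have := surjInv_eq hsurj (negS (Δ z))
  rw [show Δ (beta Δ hsurj z) = Δ (surjInv hsurj (negS (Δ z))) from rfl, this]; rfl

include hiso

lemma key_identity (u w : sphere (0 : lp X ∞) 1) :
    ‖(Δ u : Y) + (Δ w : Y)‖ = ‖(u : lp X ∞) - (beta Δ hsurj w : lp X ∞)‖ := by
  have h1 : ‖(Δ u : Y) + (Δ w : Y)‖ = dist (Δ u) (Δ (beta Δ hsurj w)) := by
    rw [Subtype.dist_eq, dist_eq_norm, Δ_beta hsurj w, sub_neg_eq_add]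
  rw [h1, hiso.dist_eq, Subtype.dist_eq, dist_eq_norm]

lemma beta_invol (z : sphere (0 : lp X ∞) 1) :
    beta Δ hsurj (beta Δ hsurj z) = z := by
  apply hiso.injective
  apply Subtype.ext
  rw [Δ_beta hsurj, Δ_beta hsurj, neg_neg]

lemma beta_dist (u w : sphere (0 : lp X ∞) 1) :
    dist (beta Δ hsurj u) (beta Δ hsurj w) = dist u w := by
  have h1 : dist (Δ (beta Δ hsurj u)) (Δ (beta Δ hsurj w)) = dist (Δ u) (Δ w) := by
    rw [Subtype.dist_eq, Subtype.dist_eq, Δ_beta hsurj, Δ_beta hsurj, dist_neg_neg]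
  rw [hiso.dist_eq, hiso.dist_eq] at h1
  exact h1

lemma dist_beta_self (z : sphere (0 : lp X ∞) 1) :
    ‖(z : lp X ∞) - (beta Δ hsurj z : lp X ∞)‖ = 2 := by
  have := key_identity hiso hsurj z z
  have h2 : ‖(Δ z : Y) + (Δ z : Y)‖ = 2 := by
    rw [← two_smul ℝ, norm_smul, mem_sphere_zero_iff_norm.mp (Δ z).2]
    norm_num
  rw [← this, h2]

end Beta


section BetaCoordA

variable {Y : Type*} [NormedAddCommGroup Y] [NormedSpace ℝ Y]
  [∀ γ, NormedSpace ℝ (X γ)] [∀ γ, StrictConvexSpace ℝ (X γ)]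
variable {Δ : sphere (0 : lp X ∞) 1 → sphere (0 : Y) 1}
  (hiso : Isometry Δ) (hsurj : Function.Surjective Δ)

include hiso

lemma beta_coord_of_small (u : sphere (0 : lp X ∞) 1) (γ₁ : Γ) {r : ℝ} (hr : r < 1)
    (h1 : ‖(u : lp X ∞) γ₁‖ = 1)
    (hoff : ∀ γ, γ ≠ γ₁ → ‖(u : lp X ∞) γ‖ ≤ r) :
    ((beta Δ hsurj u : lp X ∞)) γ₁ = -((u : lp X ∞) γ₁) := by
  set b := (beta Δ hsurj u : lp X ∞) with hb
  have hv : ‖(u : lp X ∞) - b‖ = 2 := dist_beta_self hiso hsurj u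
  have hcoord : ∀ γ, ((u : lp X ∞) - b) γ = (u : lp X ∞) γ - b γ := by
    intro γ; rw [lp.coeFn_sub]; rfl
  have hγ₁ : ‖(u : lp X ∞) γ₁ - b γ₁‖ = 2 := by
    by_contra h2
    have hle : ‖(u : lp X ∞) γ₁ - b γ₁‖ ≤ 2 := by
      have := norm_sub_le ((u : lp X ∞) γ₁) (b γ₁)
      have h3 := sphere_coord_le (z := u) γ₁
      have h4 := sphere_coord_le (z := beta Δ hsurj u) γ₁
      linarith
    have hlt : ‖(u : lp X ∞) γ₁ - b γ₁‖ < 2 := lt_of_le_of_ne hle h2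
    have hbound : ‖(u : lp X ∞) - b‖ ≤ max (‖(u : lp X ∞) γ₁ - b γ₁‖) (r + 1) := by
      apply norm_le_of_coords _ (le_trans (norm_nonneg _) (le_max_left _ _))
      intro γ
      rw [hcoord γ]
      by_cases hγ : γ = γ₁
      · subst hγ; exact le_max_left _ _
      · refine le_trans (norm_sub_le _ _) (le_trans ?_ (le_max_right _ _))
        have h5 := hoff γ hγ
        have h6 := sphere_coord_le (z := beta Δ hsurj u) γ
        linarith
    have : (2 : ℝ) < 2 := by
      calc (2:ℝ) = ‖(u : lp X ∞) - b‖ := hv.symm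
        _ ≤ max (‖(u : lp X ∞) γ₁ - b γ₁‖) (r + 1) := hbound
        _ < 2 := max_lt hlt (by linarith)
    exact absurd this (lt_irrefl _)
  have := antipodal_of_dist_two (p := (u : lp X ∞) γ₁) (q := b γ₁)
    (le_of_eq h1) (sphere_coord_le (z := beta Δ hsurj u) γ₁) hγ₁
  rw [this, neg_neg]

lemma beta_coord (z : sphere (0 : lp X ∞) 1) (γ₁ : Γ) (h1 : ‖(z : lp X ∞) γ₁‖ = 1) :
    ((beta Δ hsurj z : lp X ∞)) γ₁ = -((z : lp X ∞) γ₁) := by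
  classical
  have key : ∀ ε : ℝ, 0 < ε → ε < 1 →
      ‖((beta Δ hsurj z : lp X ∞)) γ₁ + (z : lp X ∞) γ₁‖ ≤ ε := by
    intro ε hε hε1
    set f : ∀ γ, X γ :=
      Function.update (fun γ => (1 - ε) • ((z : lp X ∞) γ)) γ₁ ((z : lp X ∞) γ₁) with hfdef
    have hfoff : ∀ γ, γ ≠ γ₁ → ‖f γ‖ ≤ 1 - ε := by
      intro γ hγ
      rw [hfdef, Function.update_of_ne hγ, norm_smul, Real.norm_eq_abs,
        abs_of_nonneg (by linarith)]
      have := sphere_coord_le (z := z) γ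
      nlinarith [norm_nonneg ((z : lp X ∞) γ)]
    have hfγ₁ : ‖f γ₁‖ = 1 := by simp [hfdef, Function.update_self, h1]
    have hf : ∀ γ, ‖f γ‖ ≤ 1 := by
      intro γ
      by_cases hγ : γ = γ₁
      · subst hγ; rw [hfγ₁]
      · linarith [hfoff γ hγ]
    set zε := mkS f hf γ₁ hfγ₁ with hzε
    have hcε := beta_coord_of_small hiso hsurj zε γ₁ (by linarith : (1:ℝ) - ε < 1)
      hfγ₁ hfoff
    have hzεγ₁ : (zε : lp X ∞) γ₁ = (z : lp X ∞) γ₁ := by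
      show f γ₁ = _; rw [hfdef, Function.update_self]
    have hd : dist zε z ≤ ε := by
      rw [Subtype.dist_eq, dist_eq_norm]
      apply norm_le_of_coords _ hε.le
      intro γ
      have hsub : ((zε : lp X ∞) - (z : lp X ∞)) γ = (zε : lp X ∞) γ - (z : lp X ∞) γ := by
        rw [lp.coeFn_sub]; rfl
      rw [hsub]
      by_cases hγ : γ = γ₁
      · subst hγ; rw [hzεγ₁]; simp [hε.le]
      · have hval : (zε : lp X ∞) γ = (1 - ε) • ((z : lp X ∞) γ) := by
          show f γ = _; rw [hfdef, Function.update_of_ne hγ]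
        have heq : (1 - ε) • ((z : lp X ∞) γ) - (z : lp X ∞) γ = (-ε) • ((z : lp X ∞) γ) := by
          module
        rw [hval, heq, norm_smul, Real.norm_eq_abs, abs_of_nonpos (by linarith), neg_neg]
        have := sphere_coord_le (z := z) γ
        nlinarith [norm_nonneg ((z : lp X ∞) γ)]
    calc ‖((beta Δ hsurj z : lp X ∞)) γ₁ + (z : lp X ∞) γ₁‖
        = ‖((beta Δ hsurj z : lp X ∞)) γ₁ - ((beta Δ hsurj zε : lp X ∞)) γ₁‖ := by
          rw [hcε, hzεγ₁, sub_neg_eq_add]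
      _ ≤ ‖(beta Δ hsurj z : lp X ∞) - (beta Δ hsurj zε : lp X ∞)‖ := by
          have hsub : ((beta Δ hsurj z : lp X ∞) - (beta Δ hsurj zε : lp X ∞)) γ₁
              = ((beta Δ hsurj z : lp X ∞)) γ₁ - ((beta Δ hsurj zε : lp X ∞)) γ₁ := by
            rw [lp.coeFn_sub]; rfl
          rw [← hsub]; exact coord_norm_le _ γ₁
      _ = dist (beta Δ hsurj z) (beta Δ hsurj zε) := by
          rw [Subtype.dist_eq, dist_eq_norm]
      _ = dist z zε := beta_dist hiso hsurj z zε
      _ ≤ ε := by rw [dist_comm]; exact hd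
  by_contra hne
  have h0 : ((beta Δ hsurj z : lp X ∞)) γ₁ + (z : lp X ∞) γ₁ ≠ 0 := by
    intro h
    exact hne (eq_neg_of_add_eq_zero_left h)
  set c := ‖((beta Δ hsurj z : lp X ∞)) γ₁ + (z : lp X ∞) γ₁‖ with hc
  have hcpos : 0 < c := norm_pos_iff.mpr h0
  have := key (min (c / 2) (1 / 2)) (by positivity)
    (lt_of_le_of_lt (min_le_right _ _) (by norm_num))
  have : c ≤ c / 2 := le_trans this (min_le_left _ _)
  linarith


end BetaCoordA

section Dir
variable [∀ γ, NormedSpace ℝ (X γ)] [∀ γ, Nontrivial (X γ)]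

lemma unitVec_exists (γ : Γ) : ∃ x : X γ, ‖x‖ = 1 := exists_norm_eq (X γ) zero_le_one

/-- A chosen unit vector in each coordinate space. -/
noncomputable def unitVec (γ : Γ) : X γ := (unitVec_exists γ).choose

lemma unitVec_norm (γ : Γ) : ‖(unitVec γ : X γ)‖ = 1 := (unitVec_exists γ).choose_spec

open scoped Classical in
/-- The normalized direction of a vector (or a fixed unit vector if it vanishes). -/
noncomputable def dir {γ : Γ} (v : X γ) : X γ := if v = 0 then unitVec γ else ‖v‖⁻¹ • v

lemma dir_norm {γ : Γ} (v : X γ) : ‖dir v‖ = 1 := by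
  rw [dir]
  split_ifs with h
  · exact unitVec_norm γ
  · have hvpos : 0 < ‖v‖ := norm_pos_iff.mpr h
    rw [norm_smul, Real.norm_eq_abs, abs_of_nonneg (by positivity)]
    field_simp

lemma norm_sub_dir {γ : Γ} (v : X γ) (hv : ‖v‖ ≤ 1) : ‖v - dir v‖ ≤ 1 := by
  rw [dir]
  split_ifs with h
  · subst h; simpa using (unitVec_norm γ).le
  · have hvpos : 0 < ‖v‖ := norm_pos_iff.mpr h
    have heq : v - ‖v‖⁻¹ • v = (1 - ‖v‖⁻¹) • v := by module
    rw [heq, norm_smul, Real.norm_eq_abs]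
    have h2 : (1 : ℝ) ≤ ‖v‖⁻¹ := by
      have h3 := mul_inv_cancel₀ (ne_of_gt hvpos)
      nlinarith [inv_nonneg.mpr (norm_nonneg v)]
    rw [abs_of_nonpos (by linarith)]
    have h4 := mul_inv_cancel₀ (ne_of_gt hvpos)
    nlinarith

lemma norm_add_dir {γ : Γ} (v : X γ) (hv : v ≠ 0) : ‖v + dir v‖ = ‖v‖ + 1 := by
  have hvpos : 0 < ‖v‖ := norm_pos_iff.mpr hv
  rw [dir, if_neg hv]
  have heq : v + ‖v‖⁻¹ • v = (1 + ‖v‖⁻¹) • v := by module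
  rw [heq, norm_smul, Real.norm_eq_abs, abs_of_nonneg (by positivity)]
  have h4 := mul_inv_cancel₀ (ne_of_gt hvpos)
  nlinarith

end Dir

section BetaCoordB

variable {Y : Type*} [NormedAddCommGroup Y] [NormedSpace ℝ Y]
  [∀ γ, NormedSpace ℝ (X γ)] [∀ γ, StrictConvexSpace ℝ (X γ)] [∀ γ, Nontrivial (X γ)]
variable {Δ : sphere (0 : lp X ∞) 1 → sphere (0 : Y) 1}
  (hiso : Isometry Δ) (hsurj : Function.Surjective Δ)

include hiso

lemma beta_unimodular (u : sphere (0 : lp X ∞) 1) (hu : ∀ γ, ‖(u : lp X ∞) γ‖ = 1) :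
    ((beta Δ hsurj u : lp X ∞)) = -(u : lp X ∞) := by
  apply lp.ext
  funext γ
  rw [lp.coeFn_neg]
  exact beta_coord hiso hsurj u γ (hu γ)

lemma beta_coord_norm (z : sphere (0 : lp X ∞) 1) (γ : Γ) :
    ‖((beta Δ hsurj z : lp X ∞)) γ‖ = ‖(z : lp X ∞) γ‖ := by
  classical
  have main : ∀ w : sphere (0 : lp X ∞) 1, ∀ γ,
      ‖((beta Δ hsurj w : lp X ∞)) γ‖ ≤ ‖(w : lp X ∞) γ‖ := by
    intro w γ
    by_cases h0 : ((beta Δ hsurj w : lp X ∞)) γ = 0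
    · simp [h0]
    · set f : ∀ γ', X γ' :=
        Function.update (fun γ' => dir ((w : lp X ∞) γ')) γ
          (dir (((beta Δ hsurj w : lp X ∞)) γ)) with hfdef
      have hf1 : ∀ γ', ‖f γ'‖ = 1 := by
        intro γ'
        by_cases hγ : γ' = γ
        · subst hγ; rw [hfdef, Function.update_self]; exact dir_norm _
        · rw [hfdef, Function.update_of_ne hγ]; exact dir_norm _
      set u := mkS f (fun γ' => (hf1 γ').le) γ (hf1 γ) with hu
      have hbu : ((beta Δ hsurj u : lp X ∞)) = -(u : lp X ∞) :=
        beta_unimodular hiso hsurj u (fun γ' => hf1 γ')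
      have hL : ‖((beta Δ hsurj w : lp X ∞)) γ‖ + 1 ≤
          dist (beta Δ hsurj w) (beta Δ hsurj u) := by
        rw [Subtype.dist_eq, dist_eq_norm, hbu, sub_neg_eq_add]
        have hcoord : ((beta Δ hsurj w : lp X ∞) + (u : lp X ∞)) γ
            = ((beta Δ hsurj w : lp X ∞)) γ + dir (((beta Δ hsurj w : lp X ∞)) γ) := by
          rw [lp.coeFn_add]
          show _ + f γ = _
          rw [hfdef, Function.update_self]
        calc ‖((beta Δ hsurj w : lp X ∞)) γ‖ + 1
            = ‖((beta Δ hsurj w : lp X ∞) + (u : lp X ∞)) γ‖ := by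
              rw [hcoord, norm_add_dir _ h0]
          _ ≤ ‖(beta Δ hsurj w : lp X ∞) + (u : lp X ∞)‖ := coord_norm_le _ γ
      have hR : dist (beta Δ hsurj w) (beta Δ hsurj u) = dist w u :=
        beta_dist hiso hsurj w u
      have hRle : dist w u ≤ 1 + ‖(w : lp X ∞) γ‖ := by
        rw [Subtype.dist_eq, dist_eq_norm]
        apply norm_le_of_coords _ (by positivity)
        intro γ'
        have hsub : (((w : lp X ∞)) - (u : lp X ∞)) γ' = (w : lp X ∞) γ' - f γ' := by
          rw [lp.coeFn_sub]; rfl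
        rw [hsub]
        by_cases hγ : γ' = γ
        · subst hγ
          rw [hfdef, Function.update_self]
          have := norm_sub_le ((w : lp X ∞) γ') (dir (((beta Δ hsurj w : lp X ∞)) γ'))
          rw [dir_norm] at this
          linarith
        · rw [hfdef, Function.update_of_ne hγ]
          have := norm_sub_dir ((w : lp X ∞) γ') (sphere_coord_le (z := w) γ')
          linarith [norm_nonneg ((w : lp X ∞) γ)]
      linarith
  have h1 := main z γ
  have h2 := main (beta Δ hsurj z) γ
  rw [beta_invol hiso hsurj z] at h2
  exact le_antisymm h1 h2

end BetaCoordB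

end TingleyAux

open TingleyAux Metric

/-- Given a surjective isometry `Δ` between unit spheres and a subset `A` of the domain
sphere, `suppSet Δ A` is the set of norm-one functionals `ψ ∈ S_{Y*}` such that
`ψ⁻¹({1}) ∩ B_Y = Δ(A)`. -/
def suppSet {Z Y : Type*} [NormedAddCommGroup Z] [NormedAddCommGroup Y] [NormedSpace ℝ Y]
    (Δ : Metric.sphere (0 : Z) 1 → Metric.sphere (0 : Y) 1)
    (A : Set (Metric.sphere (0 : Z) 1)) : Set (Y →L[ℝ] ℝ) :=
  {ψ | ‖ψ‖ = 1 ∧ ψ ⁻¹' {1} ∩ Metric.closedBall (0 : Y) 1 = (fun z => (Δ z : Y)) '' A}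

set_option maxHeartbeats 1000000 in
/-- Let `(X γ)` be a family of nonzero strictly convex real Banach spaces, `Z = lp X ∞`
their ℓ∞-sum, `Y` a real Banach space and `Δ : S_Z → S_Y` a surjective isometry.  Then for
every `γ₀` and every norm-one `x₀ ∈ X γ₀`, the set
`supp(γ₀, x₀) = {ψ ∈ S_{Y*} : ψ⁻¹({1}) ∩ B_Y = Δ(A(γ₀, x₀))}` is nonempty, is weak*-closed
in `Y*`, and is a face (a nonempty convex extreme subset) of the closed unit ball of `Y*`. -/
theorem suppSet_nonempty_weakStarClosed_face {Γ : Type*} (X : Γ → Type*)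
    [∀ γ, NormedAddCommGroup (X γ)] [∀ γ, NormedSpace ℝ (X γ)] [∀ γ, CompleteSpace (X γ)]
    [∀ γ, Nontrivial (X γ)] [∀ γ, StrictConvexSpace ℝ (X γ)]
    (Y : Type*) [NormedAddCommGroup Y] [NormedSpace ℝ Y] [CompleteSpace Y]
    (Δ : Metric.sphere (0 : lp X ∞) 1 → Metric.sphere (0 : Y) 1)
    (hiso : Isometry Δ) (hsurj : Function.Surjective Δ)
    (γ₀ : Γ) (x₀ : X γ₀) (hx₀ : ‖x₀‖ = 1) :
    (suppSet Δ {z : Metric.sphere (0 : lp X ∞) 1 | (z : lp X ∞) γ₀ = x₀}).Nonempty ∧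
    IsClosed ((StrongDual.toWeakDual (𝕜 := ℝ) (E := Y)) ''
      suppSet Δ {z : Metric.sphere (0 : lp X ∞) 1 | (z : lp X ∞) γ₀ = x₀}) ∧
    Convex ℝ (suppSet Δ {z : Metric.sphere (0 : lp X ∞) 1 | (z : lp X ∞) γ₀ = x₀}) ∧
    IsExtreme ℝ (Metric.closedBall (0 : Y →L[ℝ] ℝ) 1)
      (suppSet Δ {z : Metric.sphere (0 : lp X ∞) 1 | (z : lp X ∞) γ₀ = x₀}) := by
  classical
  set A : Set (Metric.sphere (0 : lp X ∞) 1) :=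
    {z : Metric.sphere (0 : lp X ∞) 1 | (z : lp X ∞) γ₀ = x₀} with hA
  set E : Set Y := (fun z => (Δ z : Y)) '' A with hE
  have hAmem : ∀ z : Metric.sphere (0 : lp X ∞) 1, z ∈ A ↔ (z : lp X ∞) γ₀ = x₀ :=
    fun z => Iff.rfl
  have hSnorm : ∀ y : Metric.sphere (0 : Y) 1, ‖(y : Y)‖ = 1 :=
    fun y => mem_sphere_zero_iff_norm.mp y.2
  -- the distinguished point a₀ of A
  have hx₀le : ∀ γ, ‖Function.update (fun γ => (0 : X γ)) γ₀ x₀ γ‖ ≤ 1 := by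
    intro γ
    by_cases hγ : γ = γ₀
    · subst hγ; rw [Function.update_self, hx₀]
    · rw [Function.update_of_ne hγ]; simp
  have hx₀n : ‖Function.update (fun γ => (0 : X γ)) γ₀ x₀ γ₀‖ = 1 := by
    rw [Function.update_self]; exact hx₀
  set a₀ : Metric.sphere (0 : lp X ∞) 1 := mkS _ hx₀le γ₀ hx₀n with ha₀
  have ha₀A : a₀ ∈ A := by
    show (a₀ : lp X ∞) γ₀ = x₀
    show Function.update (fun γ => (0 : X γ)) γ₀ x₀ γ₀ = x₀
    simp
  -- clique property
  have hbetaA : ∀ a, a ∈ A → ((beta Δ hsurj a : lp X ∞)) γ₀ = -x₀ := by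
    intro a ha
    rw [beta_coord hiso hsurj a γ₀ (by rw [hAmem a |>.mp ha]; exact hx₀), hAmem a |>.mp ha]
  have clique : ∀ a a', a ∈ A → a' ∈ A → ‖(Δ a : Y) + (Δ a' : Y)‖ = 2 := by
    intro a a' ha ha'
    rw [key_identity hiso hsurj a a']
    have hcoord : ((a : lp X ∞) - (beta Δ hsurj a' : lp X ∞)) γ₀ = x₀ - (-x₀) := by
      rw [lp.coeFn_sub, Pi.sub_apply, hAmem a |>.mp ha, hbetaA a' ha']
    have hge : (2:ℝ) ≤ ‖(a : lp X ∞) - (beta Δ hsurj a' : lp X ∞)‖ := by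
      have h1 := coord_norm_le ((a : lp X ∞) - (beta Δ hsurj a' : lp X ∞)) γ₀
      rw [hcoord, sub_neg_eq_add, ← two_smul ℝ, norm_smul, Real.norm_eq_abs] at h1
      rw [hx₀] at h1
      simpa using h1
    have hle : ‖(a : lp X ∞) - (beta Δ hsurj a' : lp X ∞)‖ ≤ 2 := by
      have := norm_sub_le ((a : lp X ∞)) ((beta Δ hsurj a' : lp X ∞))
      rw [mem_sphere_zero_iff_norm.mp a.2, mem_sphere_zero_iff_norm.mp (beta Δ hsurj a').2]
        at this
      linarith
    linarith
  -- segments between points of Δ(A) stay on the sphere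
  have seg_le : ∀ u v : Y, ‖u‖ = 1 → ‖v‖ = 1 → ∀ t : ℝ, 0 ≤ t → t ≤ 1 →
      ‖t • u + (1 - t) • v‖ ≤ 1 := by
    intro u v hu hv t ht0 ht1
    calc ‖t • u + (1 - t) • v‖ ≤ ‖t • u‖ + ‖(1 - t) • v‖ := norm_add_le _ _
      _ = t * 1 + (1 - t) * 1 := by
          rw [norm_smul, norm_smul, Real.norm_eq_abs, Real.norm_eq_abs, hu, hv,
            abs_of_nonneg ht0, abs_of_nonneg (by linarith)]
      _ = 1 := by ring
  have seg_eq : ∀ a a', a ∈ A → a' ∈ A → ∀ t : ℝ, 0 ≤ t → t ≤ 1 →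
      ‖t • (Δ a : Y) + (1 - t) • (Δ a' : Y)‖ = 1 := by
    intro a a' ha ha' t ht0 ht1
    have hle := seg_le (Δ a : Y) (Δ a' : Y) (hSnorm _) (hSnorm _) t ht0 ht1
    have hge : (1:ℝ) ≤ ‖t • (Δ a : Y) + (1 - t) • (Δ a' : Y)‖ := by
      have h2 : ((Δ a : Y) + (Δ a' : Y))
          = (t • (Δ a : Y) + (1 - t) • (Δ a' : Y))
            + ((1 - t) • (Δ a : Y) + t • (Δ a' : Y)) := by module
      have h3 := norm_add_le (t • (Δ a : Y) + (1 - t) • (Δ a' : Y))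
        ((1 - t) • (Δ a : Y) + t • (Δ a' : Y))
      rw [← h2, clique a a' ha ha'] at h3
      have h4 := seg_le (Δ a : Y) (Δ a' : Y) (hSnorm _) (hSnorm _) (1 - t)
        (by linarith) (by linarith)
      have h5 : (1 : ℝ) - (1 - t) = t := by ring
      rw [h5] at h4
      linarith
    linarith
  have mass : ∀ a a', a ∈ A → a' ∈ A → ∀ s : ℝ, 0 ≤ s → s ≤ 1 →
      ‖(s • (Δ a : Y) + (1 - s) • (Δ a' : Y)) + (Δ a : Y)‖ = 2 := by
    intro a a' ha ha' s hs0 hs1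
    have h1 : (s • (Δ a : Y) + (1 - s) • (Δ a' : Y)) + (Δ a : Y)
        = (2:ℝ) • (((1 + s)/2) • (Δ a : Y) + (1 - (1 + s)/2) • (Δ a' : Y)) := by
      have : (1 : ℝ) - (1 + s)/2 = (1 - s)/2 := by ring
      rw [this]; module
    rw [h1, norm_smul, seg_eq a a' ha ha' ((1 + s)/2) (by linarith) (by linarith)]
    norm_num
  -- key step: initial segments from inner points lie in E
  have segment_mem : ∀ a a', a ∈ A → a' ∈ A → ∀ r : ℝ, r < 1 →
      (∀ γ, γ ≠ γ₀ → ‖(a : lp X ∞) γ‖ ≤ r) → ∀ s : ℝ, 0 ≤ s → s ≤ 1 →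
      (s • (Δ a : Y) + (1 - s) • (Δ a' : Y)) ∈ E := by
    intro a a' ha ha' r hr hoff s hs0 hs1
    set y : Y := s • (Δ a : Y) + (1 - s) • (Δ a' : Y) with hy
    have hyn : ‖y‖ = 1 := seg_eq a a' ha ha' s hs0 hs1
    obtain ⟨z, hz⟩ := hsurj ⟨y, mem_sphere_zero_iff_norm.mpr hyn⟩
    set c := beta Δ hsurj a with hc
    have hcγ₀ : (c : lp X ∞) γ₀ = -x₀ := hbetaA a ha
    have hcoff : ∀ γ, γ ≠ γ₀ → ‖(c : lp X ∞) γ‖ ≤ r := by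
      intro γ hγ
      rw [hc, beta_coord_norm hiso hsurj a γ]
      exact hoff γ hγ
    have hzc : ‖(z : lp X ∞) - (c : lp X ∞)‖ = 2 := by
      have h1 := key_identity hiso hsurj z a
      rw [hz] at h1
      have h2 : ((⟨y, mem_sphere_zero_iff_norm.mpr hyn⟩ : Metric.sphere (0:Y) 1) : Y)
          = y := rfl
      rw [h2] at h1
      rw [← h1, mass a a' ha ha' s hs0 hs1]
    have hγ₀2 : ‖(z : lp X ∞) γ₀ - (c : lp X ∞) γ₀‖ = 2 := by
      by_contra h2
      have hle : ‖(z : lp X ∞) γ₀ - (c : lp X ∞) γ₀‖ ≤ 2 := by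
        have := norm_sub_le ((z : lp X ∞) γ₀) ((c : lp X ∞) γ₀)
        have h3 := sphere_coord_le (z := z) γ₀
        have h4 := sphere_coord_le (z := c) γ₀
        linarith
      have hlt := lt_of_le_of_ne hle h2
      have hbound : ‖(z : lp X ∞) - (c : lp X ∞)‖
          ≤ max (‖(z : lp X ∞) γ₀ - (c : lp X ∞) γ₀‖) (1 + r) := by
        apply norm_le_of_coords _ (le_trans (norm_nonneg _) (le_max_left _ _))
        intro γ
        have hsub : ((z : lp X ∞) - (c : lp X ∞)) γ = (z : lp X ∞) γ - (c : lp X ∞) γ := by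
          rw [lp.coeFn_sub]; rfl
        rw [hsub]
        by_cases hγ : γ = γ₀
        · subst hγ; exact le_max_left _ _
        · refine le_trans (norm_sub_le _ _) (le_trans ?_ (le_max_right _ _))
          have h5 := hcoff γ hγ
          have h6 := sphere_coord_le (z := z) γ
          linarith
      have hr1 : (1:ℝ) + r < 2 := by linarith
      have : (2:ℝ) < 2 := by
        calc (2:ℝ) = ‖(z : lp X ∞) - (c : lp X ∞)‖ := hzc.symm
          _ ≤ _ := hbound
          _ < 2 := max_lt hlt hr1
      exact absurd this (lt_irrefl _)
    have hzγ₀ : (z : lp X ∞) γ₀ = x₀ := by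
      have := antipodal_of_dist_two (p := (z : lp X ∞) γ₀) (q := (c : lp X ∞) γ₀)
        (sphere_coord_le (z := z) γ₀) (sphere_coord_le (z := c) γ₀) hγ₀2
      rw [hcγ₀, neg_neg] at this
      exact this
    exact ⟨z, hzγ₀, by show (Δ z : Y) = y; rw [hz]⟩
  -- E is closed
  have hE_closed : IsClosed E := by
    have hA_closed : IsClosed A := by
      have hcont : Continuous fun z : Metric.sphere (0 : lp X ∞) 1 => (z : lp X ∞) γ₀ := by
        apply LipschitzWith.continuous (K := 1)
        apply LipschitzWith.mk_one
        intro z w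
        rw [Subtype.dist_eq, dist_eq_norm, dist_eq_norm]
        have hsub : ((z : lp X ∞) - (w : lp X ∞)) γ₀
            = (z : lp X ∞) γ₀ - (w : lp X ∞) γ₀ := by rw [lp.coeFn_sub]; rfl
        rw [← hsub]
        exact coord_norm_le _ γ₀
      have hAeq : A = (fun z : Metric.sphere (0 : lp X ∞) 1 => (z : lp X ∞) γ₀) ⁻¹' {x₀} := by
        ext z; simp [hA]
      rw [hAeq]
      exact IsClosed.preimage hcont isClosed_singleton
    haveI : CompleteSpace (Metric.sphere (0 : lp X ∞) 1) :=
      (isClosed_sphere (x := (0 : lp X ∞)) (ε := 1)).completeSpace_coe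
    have hAcompl : IsComplete A := hA_closed.isComplete
    have hφ : Isometry (fun z : Metric.sphere (0 : lp X ∞) 1 => (Δ z : Y)) :=
      isometry_subtype_coe.comp hiso
    have hEcompl : IsComplete E :=
      (isComplete_image_iff hφ.isUniformInducing).mpr hAcompl
    exact hEcompl.isClosed
  -- E is convex
  have hE_convex : Convex ℝ E := by
    rintro e₁ ⟨a, ha, rfl⟩ e₂ ⟨a', ha', rfl⟩ aa bb haa hbb hab
    have hbb' : bb = 1 - aa := by linarith
    subst hbb'
    rw [← hE_closed.closure_eq]
    rw [Metric.mem_closure_iff]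
    intro ε hε
    set δ : ℝ := min (ε/2) (1/2) with hδ
    have hδ0 : 0 < δ := by
      apply lt_min (by linarith) (by norm_num)
    have hδ1 : δ < 1 := lt_of_le_of_lt (min_le_right _ _) (by norm_num)
    -- the inner approximant of a
    set g : ∀ γ, X γ :=
      Function.update (fun γ => (1 - δ) • ((a : lp X ∞) γ)) γ₀ x₀ with hg
    have hgle : ∀ γ, ‖g γ‖ ≤ 1 := by
      intro γ
      by_cases hγ : γ = γ₀
      · subst hγ; rw [hg, Function.update_self, hx₀]
      · rw [hg, Function.update_of_ne hγ, norm_smul, Real.norm_eq_abs,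
          abs_of_nonneg (by linarith)]
        have := sphere_coord_le (z := a) γ
        nlinarith [norm_nonneg ((a : lp X ∞) γ)]
    have hgγ₀ : ‖g γ₀‖ = 1 := by rw [hg, Function.update_self, hx₀]
    set aδ := mkS g hgle γ₀ hgγ₀ with haδ
    have haδA : aδ ∈ A := by
      show (aδ : lp X ∞) γ₀ = x₀
      show g γ₀ = x₀
      rw [hg, Function.update_self]
    have haδoff : ∀ γ, γ ≠ γ₀ → ‖(aδ : lp X ∞) γ‖ ≤ 1 - δ := by
      intro γ hγ
      show ‖g γ‖ ≤ 1 - δ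
      rw [hg, Function.update_of_ne hγ, norm_smul, Real.norm_eq_abs,
        abs_of_nonneg (by linarith)]
      have := sphere_coord_le (z := a) γ
      nlinarith [norm_nonneg ((a : lp X ∞) γ)]
    have hq : (aa • (Δ aδ : Y) + (1 - aa) • (Δ a' : Y)) ∈ E :=
      segment_mem aδ a' haδA ha' (1 - δ) (by linarith) haδoff aa haa (by linarith)
    refine ⟨aa • (Δ aδ : Y) + (1 - aa) • (Δ a' : Y), hq, ?_⟩
    have hdista : dist a aδ ≤ δ := by
      rw [Subtype.dist_eq, dist_eq_norm]
      apply norm_le_of_coords _ hδ0.le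
      intro γ
      have hsub : ((a : lp X ∞) - (aδ : lp X ∞)) γ
          = (a : lp X ∞) γ - (aδ : lp X ∞) γ := by rw [lp.coeFn_sub]; rfl
      rw [hsub]
      by_cases hγ : γ = γ₀
      · subst hγ
        have h1 : (a : lp X ∞) γ = x₀ := hAmem a |>.mp ha
        have h2 : (aδ : lp X ∞) γ = x₀ := haδA
        rw [h1, h2, sub_self, norm_zero]
        exact hδ0.le
      · have hval : (aδ : lp X ∞) γ = (1 - δ) • ((a : lp X ∞) γ) := by
          show g γ = _
          rw [hg, Function.update_of_ne hγ]
        rw [hval]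
        have heq2 : (a : lp X ∞) γ - (1 - δ) • ((a : lp X ∞) γ)
            = δ • ((a : lp X ∞) γ) := by module
        rw [heq2, norm_smul, Real.norm_eq_abs, abs_of_nonneg hδ0.le]
        have := sphere_coord_le (z := a) γ
        nlinarith [norm_nonneg ((a : lp X ∞) γ)]
    have hdistΔ : dist (Δ a : Y) (Δ aδ : Y) ≤ δ := by
      have : dist (Δ a) (Δ aδ) = dist a aδ := hiso.dist_eq a aδ
      rw [Subtype.dist_eq] at this
      rw [this]; exact hdista
    calc dist (aa • (Δ a : Y) + (1 - aa) • (Δ a' : Y))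
          (aa • (Δ aδ : Y) + (1 - aa) • (Δ a' : Y))
        = ‖aa • ((Δ a : Y) - (Δ aδ : Y))‖ := by
          rw [dist_eq_norm]
          congr 1
          module
      _ = aa * ‖(Δ a : Y) - (Δ aδ : Y)‖ := by
          rw [norm_smul, Real.norm_eq_abs, abs_of_nonneg haa]
      _ ≤ 1 * δ := by
          have h1 : ‖(Δ a : Y) - (Δ aδ : Y)‖ ≤ δ := by
            rw [← dist_eq_norm]; exact hdistΔ
          have h2 : aa ≤ 1 := by linarith
          nlinarith [norm_nonneg ((Δ a : Y) - (Δ aδ : Y))]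
      _ < ε := by
          rw [one_mul, hδ]
          exact lt_of_le_of_lt (min_le_left _ _) (by linarith)
  -- the co-facial criterion
  have main_face : ∀ y : Y, ‖y‖ = 1 → (∀ a, a ∈ A → ‖y + (Δ a : Y)‖ = 2) → y ∈ E := by
    intro y hyn hyA
    obtain ⟨z, hz⟩ := hsurj ⟨y, mem_sphere_zero_iff_norm.mpr hyn⟩
    set f : ∀ γ, X γ := Function.update (fun γ => (z : lp X ∞) γ) γ₀ (-x₀) with hf
    have hfle : ∀ γ, ‖f γ‖ ≤ 1 := by
      intro γ
      by_cases hγ : γ = γ₀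
      · subst hγ; rw [hf, Function.update_self, norm_neg, hx₀]
      · rw [hf, Function.update_of_ne hγ]; exact sphere_coord_le (z := z) γ
    have hfγ₀ : ‖f γ₀‖ = 1 := by rw [hf, Function.update_self, norm_neg, hx₀]
    set w := mkS f hfle γ₀ hfγ₀ with hw
    have hwγ₀ : (w : lp X ∞) γ₀ = -x₀ := by
      show f γ₀ = -x₀; rw [hf, Function.update_self]
    have hbwA : beta Δ hsurj w ∈ A := by
      show ((beta Δ hsurj w : lp X ∞)) γ₀ = x₀
      rw [beta_coord hiso hsurj w γ₀ (by rw [hwγ₀, norm_neg]; exact hx₀), hwγ₀, neg_neg]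
    have h1 := key_identity hiso hsurj z (beta Δ hsurj w)
    rw [hz, beta_invol hiso hsurj w] at h1
    have h2 : ((⟨y, mem_sphere_zero_iff_norm.mpr hyn⟩ : Metric.sphere (0:Y) 1) : Y) = y := rfl
    rw [h2] at h1
    rw [hyA (beta Δ hsurj w) hbwA] at h1
    -- ‖z - w‖ = 2, concentrated at γ₀
    have hcoordeq : ‖(z : lp X ∞) - (w : lp X ∞)‖ = ‖(z : lp X ∞) γ₀ - (w : lp X ∞) γ₀‖ := by
      apply le_antisymm
      · apply norm_le_of_coords _ (norm_nonneg _)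
        intro γ
        have hsub : ((z : lp X ∞) - (w : lp X ∞)) γ
            = (z : lp X ∞) γ - (w : lp X ∞) γ := by rw [lp.coeFn_sub]; rfl
        rw [hsub]
        by_cases hγ : γ = γ₀
        · subst hγ; exact le_refl _
        · have : (w : lp X ∞) γ = (z : lp X ∞) γ := by
            show f γ = _; rw [hf, Function.update_of_ne hγ]
          rw [this, sub_self, norm_zero]
          exact norm_nonneg _
      · have h3 := coord_norm_le ((z : lp X ∞) - (w : lp X ∞)) γ₀
        have hsub : ((z : lp X ∞) - (w : lp X ∞)) γ₀
            = (z : lp X ∞) γ₀ - (w : lp X ∞) γ₀ := by rw [lp.coeFn_sub]; rfl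
        rw [hsub] at h3
        exact h3
    rw [hcoordeq] at h1
    have hzγ₀ : (z : lp X ∞) γ₀ = x₀ := by
      have := antipodal_of_dist_two (p := (z : lp X ∞) γ₀) (q := (w : lp X ∞) γ₀)
        (sphere_coord_le (z := z) γ₀) (sphere_coord_le (z := w) γ₀) (h1.symm)
      rw [hwγ₀, neg_neg] at this
      exact this
    exact ⟨z, hzγ₀, by show (Δ z : Y) = y; rw [hz]⟩
  -- the distinguished element of E
  have hΔa₀E : (Δ a₀ : Y) ∈ E := ⟨a₀, ha₀A, rfl⟩
  -- norm bound from boundedness on the unit ball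
  have opnorm_le_of_le : ∀ (g : Y →L[ℝ] ℝ) (C : ℝ), 0 ≤ C →
      (∀ y : Y, ‖y‖ ≤ 1 → g y ≤ C) → ‖g‖ ≤ C := by
    intro g C hC hg
    apply ContinuousLinearMap.opNorm_le_bound _ hC
    intro y
    rcases eq_or_ne y 0 with rfl | hy0
    · simp
    · have hpos : (0:ℝ) < ‖y‖ := norm_pos_iff.mpr hy0
      have hcancel : ‖y‖⁻¹ * ‖y‖ = 1 := inv_mul_cancel₀ hpos.ne'
      have hunit : ‖‖y‖⁻¹ • y‖ ≤ 1 := by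
        rw [norm_smul, Real.norm_eq_abs, abs_of_nonneg (by positivity)]
        rw [hcancel]
      have h1 := hg _ hunit
      have h2 := hg (-(‖y‖⁻¹ • y)) (by rwa [norm_neg])
      rw [map_smul, smul_eq_mul] at h1
      rw [map_neg, map_smul, smul_eq_mul] at h2
      have key : ∀ v : ℝ, ‖y‖⁻¹ * v ≤ C → v ≤ C * ‖y‖ := by
        intro v hv
        have h3 := mul_le_mul_of_nonneg_right hv hpos.le
        calc v = ‖y‖⁻¹ * v * ‖y‖ := by
              rw [mul_comm (‖y‖⁻¹) v, mul_assoc, hcancel, mul_one]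
          _ ≤ C * ‖y‖ := h3
      have h1' : g y ≤ C * ‖y‖ := key _ h1
      have h2' : -(g y) ≤ C * ‖y‖ := key _ (by rw [mul_neg]; exact h2)
      rw [Real.norm_eq_abs, abs_le]
      constructor
      · linarith
      · linarith
  -- characterization of the support set
  have supp_char : ∀ ψ : Y →L[ℝ] ℝ,
      ψ ∈ suppSet Δ A ↔ (‖ψ‖ ≤ 1 ∧ ∀ a, a ∈ A → ψ (Δ a : Y) = 1) := by
    intro ψ
    constructor
    · rintro ⟨hψn, hψeq⟩
      refine ⟨hψn.le, fun a ha => ?_⟩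
      have hmem : (Δ a : Y) ∈ ψ ⁻¹' {1} ∩ Metric.closedBall (0 : Y) 1 := by
        rw [hψeq]; exact ⟨a, ha, rfl⟩
      exact hmem.1
    · rintro ⟨hψ1, hψA⟩
      have hψn : ‖ψ‖ = 1 := by
        apply le_antisymm hψ1
        calc (1:ℝ) = ‖ψ (Δ a₀ : Y)‖ := by rw [hψA a₀ ha₀A]; simp
          _ ≤ ‖ψ‖ * ‖(Δ a₀ : Y)‖ := ψ.le_opNorm _
          _ = ‖ψ‖ := by rw [hSnorm (Δ a₀), mul_one]
      refine ⟨hψn, ?_⟩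
      ext y
      constructor
      · rintro ⟨hy1, hy2⟩
        have hy1' : ψ y = 1 := hy1
        have hyle : ‖y‖ ≤ 1 := mem_closedBall_zero_iff.mp hy2
        have hyn : ‖y‖ = 1 := by
          apply le_antisymm hyle
          calc (1:ℝ) = ‖ψ y‖ := by rw [hy1']; simp
            _ ≤ ‖ψ‖ * ‖y‖ := ψ.le_opNorm _
            _ ≤ ‖y‖ := by nlinarith [norm_nonneg y]
        apply main_face y hyn
        intro a ha
        have hle : ‖y + (Δ a : Y)‖ ≤ 2 := by
          have := norm_add_le y (Δ a : Y)
          rw [hyn, hSnorm (Δ a)] at this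
          linarith
        have hge : (2:ℝ) ≤ ‖y + (Δ a : Y)‖ := by
          have h3 : ψ (y + (Δ a : Y)) = 2 := by
            rw [map_add, hy1', hψA a ha]; norm_num
          calc (2:ℝ) = ‖ψ (y + (Δ a : Y))‖ := by rw [h3]; simp
            _ ≤ ‖ψ‖ * ‖y + (Δ a : Y)‖ := ψ.le_opNorm _
            _ ≤ ‖y + (Δ a : Y)‖ := by nlinarith [norm_nonneg (y + (Δ a : Y))]
        linarith
      · rintro ⟨a, ha, rfl⟩
        exact ⟨hψA a ha, mem_closedBall_zero_iff.mpr (le_of_eq (hSnorm (Δ a)))⟩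
  -- nonemptiness via separation
  have hdisj : Disjoint (Metric.ball (0:Y) 1) E := by
    rw [Set.disjoint_left]
    rintro y hy ⟨a, ha, rfl⟩
    rw [mem_ball_zero_iff] at hy
    rw [hSnorm (Δ a)] at hy
    exact lt_irrefl _ hy
  obtain ⟨f, u, hf1, hf2⟩ :=
    geometric_hahn_banach_open (convex_ball (0:Y) 1) isOpen_ball hE_convex hdisj
  have hu0 : 0 < u := by
    have := hf1 0 (mem_ball_self one_pos)
    simpa using this
  have hfle : ∀ y : Y, ‖y‖ ≤ 1 → f y ≤ u := by
    intro y hy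
    by_contra hcon
    push_neg at hcon
    have hfy0 : 0 < f y := lt_trans hu0 hcon
    obtain ⟨t, ht1, ht2⟩ := exists_between (show u / f y < 1 by
      rw [div_lt_one hfy0]; exact hcon)
    have ht0 : 0 < t := lt_of_le_of_lt (by positivity) ht1
    have htmem : t • y ∈ Metric.ball (0:Y) 1 := by
      rw [mem_ball_zero_iff, norm_smul, Real.norm_eq_abs, abs_of_pos ht0]
      nlinarith [norm_nonneg y]
    have h5 := hf1 (t • y) htmem
    rw [map_smul, smul_eq_mul] at h5
    have h6 : u < t * f y := by
      rw [div_lt_iff₀ hfy0] at ht1; linarith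
    linarith
  have hfnorm : ‖f‖ ≤ u := opnorm_le_of_le f u hu0.le hfle
  set ψ₀ : Y →L[ℝ] ℝ := u⁻¹ • f with hψ₀def
  have hψ₀mem : ψ₀ ∈ suppSet Δ A := by
    rw [supp_char]
    constructor
    · apply opnorm_le_of_le _ 1 zero_le_one
      intro y hy
      have h1 := hfle y hy
      have h2 : ψ₀ y = u⁻¹ * f y := rfl
      rw [h2]
      calc u⁻¹ * f y ≤ u⁻¹ * u := mul_le_mul_of_nonneg_left h1 (inv_nonneg.mpr hu0.le)
        _ = 1 := inv_mul_cancel₀ hu0.ne'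
    · intro a ha
      have h1 : u ≤ f (Δ a : Y) := hf2 _ ⟨a, ha, rfl⟩
      have h2 : f (Δ a : Y) ≤ u := hfle _ (le_of_eq (hSnorm (Δ a)))
      have h3 : f (Δ a : Y) = u := le_antisymm h2 h1
      rw [hψ₀def]
      simp only [ContinuousLinearMap.coe_smul', Pi.smul_apply, smul_eq_mul]
      rw [h3, inv_mul_cancel₀ hu0.ne']
  refine ⟨⟨ψ₀, hψ₀mem⟩, ?_, ?_, ?_⟩
  -- weak-star closedness
  · have himg : (StrongDual.toWeakDual (𝕜 := ℝ) (E := Y)) '' suppSet Δ A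
        = {φ : WeakDual ℝ Y | ∀ y : Y, ‖y‖ ≤ 1 → φ y ≤ 1}
          ∩ {φ : WeakDual ℝ Y | ∀ a, a ∈ A → φ (Δ a : Y) = 1} := by
      ext φ
      constructor
      · rintro ⟨ψ', hψ', rfl⟩
        rw [supp_char] at hψ'
        constructor
        · intro y hy
          have h1 := ψ'.le_opNorm y
          calc (StrongDual.toWeakDual (𝕜 := ℝ) (E := Y) ψ') y = ψ' y := rfl
            _ ≤ ‖ψ' y‖ := by rw [Real.norm_eq_abs]; exact le_abs_self _
            _ ≤ ‖ψ'‖ * ‖y‖ := h1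
            _ ≤ 1 := by nlinarith [hψ'.1, norm_nonneg y, norm_nonneg ψ']
        · intro a ha
          exact hψ'.2 a ha
      · rintro ⟨hφ1, hφ2⟩
        refine ⟨(StrongDual.toWeakDual (𝕜 := ℝ) (E := Y)).symm φ, ?_,
          LinearEquiv.apply_symm_apply _ _⟩
        rw [supp_char]
        constructor
        · exact opnorm_le_of_le _ 1 zero_le_one (fun y hy => hφ1 y hy)
        · intro a ha
          exact hφ2 a ha
    rw [himg]
    apply IsClosed.inter
    · have hset : {φ : WeakDual ℝ Y | ∀ y : Y, ‖y‖ ≤ 1 → φ y ≤ 1}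
          = ⋂ (y : Y) (_ : ‖y‖ ≤ 1), {φ : WeakDual ℝ Y | φ y ≤ 1} := by
        ext φ
        constructor
        · intro hφ
          exact Set.mem_iInter.mpr fun y => Set.mem_iInter.mpr fun hy => hφ y hy
        · intro hφ y hy
          exact Set.mem_iInter.mp (Set.mem_iInter.mp hφ y) hy
      rw [hset]
      refine isClosed_iInter fun y => isClosed_iInter fun hy => ?_
      exact IsClosed.preimage (WeakDual.eval_continuous y) isClosed_Iic
    · have hset : {φ : WeakDual ℝ Y | ∀ a, a ∈ A → φ (Δ a : Y) = 1}
          = ⋂ (a : Metric.sphere (0 : lp X ∞) 1) (_ : a ∈ A),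
              {φ : WeakDual ℝ Y | φ (Δ a : Y) = 1} := by
        ext φ
        constructor
        · intro hφ
          exact Set.mem_iInter.mpr fun a => Set.mem_iInter.mpr fun ha => hφ a ha
        · intro hφ a ha
          exact Set.mem_iInter.mp (Set.mem_iInter.mp hφ a) ha
      rw [hset]
      refine isClosed_iInter fun a => isClosed_iInter fun ha => ?_
      exact IsClosed.preimage (WeakDual.eval_continuous _) isClosed_singleton
  -- convexity
  · intro ψ₁ hψ₁ ψ₂ hψ₂ aa bb haa hbb hab
    rw [supp_char] at hψ₁ hψ₂ ⊢
    constructor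
    · apply opnorm_le_of_le _ 1 zero_le_one
      intro y hy
      have h1 : (aa • ψ₁ + bb • ψ₂) y = aa * ψ₁ y + bb * ψ₂ y := rfl
      rw [h1]
      have b1 : ψ₁ y ≤ 1 := by
        have h2 := ψ₁.le_opNorm y
        calc ψ₁ y ≤ ‖ψ₁ y‖ := by rw [Real.norm_eq_abs]; exact le_abs_self _
          _ ≤ ‖ψ₁‖ * ‖y‖ := h2
          _ ≤ 1 := by nlinarith [hψ₁.1, norm_nonneg y, norm_nonneg ψ₁]
      have b2 : ψ₂ y ≤ 1 := by
        have h2 := ψ₂.le_opNorm y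
        calc ψ₂ y ≤ ‖ψ₂ y‖ := by rw [Real.norm_eq_abs]; exact le_abs_self _
          _ ≤ ‖ψ₂‖ * ‖y‖ := h2
          _ ≤ 1 := by nlinarith [hψ₂.1, norm_nonneg y, norm_nonneg ψ₂]
      have c1 : aa * ψ₁ y ≤ aa * 1 := mul_le_mul_of_nonneg_left b1 haa
      have c2 : bb * ψ₂ y ≤ bb * 1 := mul_le_mul_of_nonneg_left b2 hbb
      linarith
    · intro a ha
      simp only [ContinuousLinearMap.add_apply, ContinuousLinearMap.coe_smul',
        Pi.smul_apply, smul_eq_mul]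
      rw [hψ₁.2 a ha, hψ₂.2 a ha, mul_one, mul_one, hab]
  -- extremality
  · constructor
    · intro ψ' hψ'
      rw [supp_char] at hψ'
      rw [mem_closedBall_zero_iff]
      exact hψ'.1
    · intro x₁ hx₁ x₂ hx₂ ψ' hψ' hseg
      obtain ⟨aa, bb, haa, hbb, hab, hsum⟩ := hseg
      rw [supp_char] at hψ'
      rw [mem_closedBall_zero_iff] at hx₁ hx₂
      have hbound : ∀ (g : Y →L[ℝ] ℝ), ‖g‖ ≤ 1 → ∀ a, a ∈ A → g (Δ a : Y) ≤ 1 := by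
        intro g hg a ha
        have h1 := g.le_opNorm (Δ a : Y)
        rw [hSnorm (Δ a), mul_one] at h1
        calc g (Δ a : Y) ≤ ‖g (Δ a : Y)‖ := by rw [Real.norm_eq_abs]; exact le_abs_self _
          _ ≤ ‖g‖ := h1
          _ ≤ 1 := hg
      have hkey : ∀ a, a ∈ A → x₁ (Δ a : Y) = 1 ∧ x₂ (Δ a : Y) = 1 := by
        intro a ha
        have h1 : aa * x₁ (Δ a : Y) + bb * x₂ (Δ a : Y) = 1 := by
          have h0 := hψ'.2 a ha
          rw [← hsum] at h0
          simpa [ContinuousLinearMap.add_apply, smul_eq_mul] using h0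
        have h2 := hbound x₁ hx₁ a ha
        have h3 := hbound x₂ hx₂ a ha
        have h4 : aa * x₁ (Δ a : Y) = aa * 1 := by
          have h5 : bb * x₂ (Δ a : Y) ≤ bb * 1 := mul_le_mul_of_nonneg_left h3 hbb.le
          have h6 : aa * x₁ (Δ a : Y) ≤ aa * 1 := mul_le_mul_of_nonneg_left h2 haa.le
          linarith
        have h7 : bb * x₂ (Δ a : Y) = bb * 1 := by
          have h6 : aa * x₁ (Δ a : Y) ≤ aa * 1 := mul_le_mul_of_nonneg_left h2 haa.le
          have h5 : bb * x₂ (Δ a : Y) ≤ bb * 1 := mul_le_mul_of_nonneg_left h3 hbb.le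
          linarith
        exact ⟨mul_left_cancel₀ haa.ne' h4, mul_left_cancel₀ hbb.ne' h7⟩
      rw [supp_char]
      exact ⟨hx₁, fun a ha => (hkey a ha).1⟩
end

section
/- Let X be a real strictly convex Banach space and let K be a locally compact Hausdorff space. Then for every t_0 ∈ K and every x_0 ∈ S_X, the set A(t_0, x_0) := { f ∈ S_{C_0(K,X)} : f(t_0) = x_0 } is a maximal convex subset of the unit sphere of C_0(K, X), i.e., A(t_0, x_0) is convex and is not properly contained in any convex subset of S_{C_0(K,X)}. -/
open scoped ZeroAtInfty
open Set Filter Topology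

namespace CzeroFaceAux

variable {X : Type*} [NormedAddCommGroup X]
variable {K : Type*} [TopologicalSpace K]

theorem czero_norm_apply_le (f : C₀(K, X)) (t : K) : ‖f t‖ ≤ ‖f‖ := by
  rw [← ZeroAtInftyContinuousMap.norm_toBCF_eq_norm]
  exact f.toBCF.norm_coe_le_norm t

theorem czero_norm_le (f : C₀(K, X)) {M : ℝ} (hM : 0 ≤ M) (h : ∀ t, ‖f t‖ ≤ M) : ‖f‖ ≤ M := by
  rw [← ZeroAtInftyContinuousMap.norm_toBCF_eq_norm]
  exact (BoundedContinuousFunction.norm_le hM).mpr h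

end CzeroFaceAux

/-- Let `X` be a strictly convex real Banach space and `K` a locally compact Hausdorff
space.  For every `t₀ ∈ K` and every norm-one `x₀ ∈ X`, the set
`A(t₀, x₀) = {f ∈ S_{C₀(K,X)} : f t₀ = x₀}` is a maximal convex subset of the unit sphere
of `C₀(K, X)`: it is convex and coincides with any convex subset of the sphere containing
it. -/
theorem czero_face_maximal_convex (X : Type*) [NormedAddCommGroup X] [NormedSpace ℝ X]
    [CompleteSpace X] [StrictConvexSpace ℝ X]
    (K : Type*) [TopologicalSpace K] [LocallyCompactSpace K] [T2Space K]
    (t₀ : K) (x₀ : X) (hx₀ : ‖x₀‖ = 1) :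
    Convex ℝ {f : C₀(K, X) | f ∈ Metric.sphere (0 : C₀(K, X)) 1 ∧ f t₀ = x₀} ∧
    ∀ C : Set C₀(K, X), C ⊆ Metric.sphere (0 : C₀(K, X)) 1 → Convex ℝ C →
      {f : C₀(K, X) | f ∈ Metric.sphere (0 : C₀(K, X)) 1 ∧ f t₀ = x₀} ⊆ C →
      C = {f : C₀(K, X) | f ∈ Metric.sphere (0 : C₀(K, X)) 1 ∧ f t₀ = x₀} := by
  open CzeroFaceAux in
  constructor
  · rintro f ⟨hf, hft⟩ g ⟨hg, hgt⟩ a b ha hb hab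
    rw [mem_sphere_zero_iff_norm] at hf hg
    have happly : (a • f + b • g) t₀ = x₀ := by
      simp only [ZeroAtInftyContinuousMap.coe_add, ZeroAtInftyContinuousMap.coe_smul,
        Pi.add_apply, Pi.smul_apply, hft, hgt, ← add_smul, hab, one_smul]
    constructor
    · rw [mem_sphere_zero_iff_norm]
      refine le_antisymm ?_ ?_
      · refine czero_norm_le _ zero_le_one fun t => ?_
        calc ‖(a • f + b • g) t‖ ≤ a * ‖f t‖ + b * ‖g t‖ := by
              simp only [ZeroAtInftyContinuousMap.coe_add, ZeroAtInftyContinuousMap.coe_smul,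
                Pi.add_apply, Pi.smul_apply]
              refine (norm_add_le _ _).trans ?_
              rw [norm_smul, norm_smul, Real.norm_eq_abs, Real.norm_eq_abs,
                abs_of_nonneg ha, abs_of_nonneg hb]
          _ ≤ a * 1 + b * 1 := by
              gcongr
              · exact (czero_norm_apply_le f t).trans hf.le
              · exact (czero_norm_apply_le g t).trans hg.le
          _ = 1 := by linarith
      · calc (1 : ℝ) = ‖(a • f + b • g) t₀‖ := by rw [happly, hx₀]
          _ ≤ ‖a • f + b • g‖ := czero_norm_apply_le _ _
    · exact happly
  · intro C hCs hCc hAC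
    refine Subset.antisymm ?_ hAC
    intro g hgC
    have hg1 : ‖g‖ = 1 := mem_sphere_zero_iff_norm.mp (hCs hgC)
    refine ⟨hCs hgC, ?_⟩
    by_contra hne
    -- `‖x₀ + g t₀‖ < 2`
    have hgt₀ : ‖g t₀‖ ≤ 1 := (czero_norm_apply_le g t₀).trans hg1.le
    have hm : ‖x₀ + g t₀‖ < 2 := by
      rcases lt_or_eq_of_le hgt₀ with h | h
      · calc ‖x₀ + g t₀‖ ≤ ‖x₀‖ + ‖g t₀‖ := norm_add_le _ _
          _ < 2 := by rw [hx₀]; linarith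
      · refine lt_of_le_of_ne (le_trans (norm_add_le _ _) (by rw [hx₀, h]; norm_num)) fun habs => ?_
        exact hne (eq_of_norm_eq_of_norm_add_eq (by rw [hx₀, h]) (by rw [habs, hx₀, h]; norm_num)).symm
    set δ : ℝ := (2 - ‖x₀ + g t₀‖) / 2 with hδdef
    have hδ : 0 < δ := by simp only [hδdef]; linarith
    have hxgδ : ‖x₀ + g t₀‖ = 2 - 2 * δ := by simp only [hδdef]; ring
    have hδ1 : δ ≤ 1 := by
      have := norm_nonneg (x₀ + g t₀); simp only [hδdef]; linarith
    -- the neighborhood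
    set U : Set K := {t | ‖g t - g t₀‖ < δ} with hUdef
    have hUopen : IsOpen U := by
      have : Continuous fun t => ‖g t - g t₀‖ := (g.continuous.sub continuous_const).norm
      exact isOpen_lt this continuous_const
    have ht₀U : t₀ ∈ U := by simp [hUdef, hδ]
    obtain ⟨φ, hφ1, hφ0, hφc, hφmem⟩ :=
      exists_continuous_one_zero_of_isCompact (isCompact_singleton (x := t₀))
        hUopen.isClosed_compl (disjoint_compl_right_iff_subset.mpr (singleton_subset_iff.mpr ht₀U))
    have hφt₀ : φ t₀ = 1 := hφ1 rfl
    -- build f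
    have hcont : Continuous fun t => φ t • (x₀ + g t) - g t := by
      exact ((φ.continuous.smul (continuous_const.add g.continuous))).sub g.continuous
    have hzero : Tendsto (fun t => φ t • (x₀ + g t) - g t) (cocompact K) (𝓝 0) := by
      have h1 : HasCompactSupport fun t => φ t • (x₀ + g t) :=
        hφc.smul_right
      have h2 : Tendsto (fun t => φ t • (x₀ + g t)) (cocompact K) (𝓝 0) :=
        h1.is_zero_at_infty
      simpa using h2.sub (g.zero_at_infty')
    set f : C₀(K, X) := ⟨⟨fun t => φ t • (x₀ + g t) - g t, hcont⟩, hzero⟩ with hfdef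
    have hfapp : ∀ t, f t = φ t • (x₀ + g t) - g t := fun t => rfl
    have hft₀ : f t₀ = x₀ := by rw [hfapp, hφt₀, one_smul]; abel
    have hfA : f ∈ {f : C₀(K, X) | f ∈ Metric.sphere (0 : C₀(K, X)) 1 ∧ f t₀ = x₀} := by
      refine ⟨mem_sphere_zero_iff_norm.mpr (le_antisymm ?_ ?_), hft₀⟩
      · refine czero_norm_le _ zero_le_one fun t => ?_
        rw [hfapp]
        have hmem := hφmem t
        have : φ t • (x₀ + g t) - g t = φ t • x₀ - (1 - φ t) • g t := by
          rw [smul_add, sub_smul, one_smul]; abel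
        rw [this]
        have hgtle : ‖g t‖ ≤ 1 := (czero_norm_apply_le g t).trans hg1.le
        calc ‖φ t • x₀ - (1 - φ t) • g t‖ ≤ ‖φ t • x₀‖ + ‖(1 - φ t) • g t‖ := norm_sub_le _ _
          _ = φ t * ‖x₀‖ + (1 - φ t) * ‖g t‖ := by
              rw [norm_smul, norm_smul, Real.norm_eq_abs, Real.norm_eq_abs,
                abs_of_nonneg hmem.1, abs_of_nonneg (by linarith [hmem.2])]
          _ ≤ 1 := by
              rw [hx₀]
              nlinarith [hmem.1, hmem.2, norm_nonneg (g t)]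
      · calc (1 : ℝ) = ‖f t₀‖ := by rw [hft₀, hx₀]
          _ ≤ ‖f‖ := czero_norm_apply_le _ _
    -- midpoint
    have hmid : (1 / 2 : ℝ) • f + (1 / 2 : ℝ) • g ∈ C :=
      hCc (hAC hfA) hgC (by norm_num) (by norm_num) (by norm_num)
    have hmidnorm : ‖(1 / 2 : ℝ) • f + (1 / 2 : ℝ) • g‖ = 1 :=
      mem_sphere_zero_iff_norm.mp (hCs hmid)
    have hbound : ‖(1 / 2 : ℝ) • f + (1 / 2 : ℝ) • g‖ ≤ 1 - δ / 2 := by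
      refine czero_norm_le _ (by linarith) fun t => ?_
      have happt : ((1 / 2 : ℝ) • f + (1 / 2 : ℝ) • g) t = (1 / 2 : ℝ) • (φ t • (x₀ + g t)) := by
        simp only [ZeroAtInftyContinuousMap.coe_add, ZeroAtInftyContinuousMap.coe_smul,
          Pi.add_apply, Pi.smul_apply, hfapp]
        rw [smul_sub]
        abel
      rw [happt]
      have hmem := hφmem t
      by_cases htU : t ∈ U
      · have hxg : ‖x₀ + g t‖ ≤ 2 - δ := by
          calc ‖x₀ + g t‖ = ‖(x₀ + g t₀) + (g t - g t₀)‖ := by congr 1; abel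
            _ ≤ ‖x₀ + g t₀‖ + ‖g t - g t₀‖ := norm_add_le _ _
            _ ≤ (2 - 2 * δ) + δ := by
                rw [hxgδ]; gcongr; exact le_of_lt htU
            _ = 2 - δ := by ring
        calc ‖(1 / 2 : ℝ) • (φ t • (x₀ + g t))‖ = 1 / 2 * (φ t * ‖x₀ + g t‖) := by
              rw [norm_smul, norm_smul, Real.norm_eq_abs, Real.norm_eq_abs,
                abs_of_nonneg (by norm_num), abs_of_nonneg hmem.1]
          _ ≤ 1 - δ / 2 := by
              nlinarith [hmem.1, hmem.2, norm_nonneg (x₀ + g t)]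
      · have : φ t = 0 := hφ0 htU
        rw [this, zero_smul, smul_zero, norm_zero]
        linarith
    linarith [hmidnorm ▸ hbound]
end
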